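/- arXiv:2008.13393 — 4 statements merged into one kernel-verified Lean document; each statement's English description precedes it below -/
import Mathlib

section
/- For every real number K > 1 and every family (N_p(i))_{p∈ℕ}, i ∈ ℕ, of increasing sequences of positive integers, there exists a family (E_p(i))_{p∈ℕ}, i ∈ ℕ, of subsets of ℕ, each having positive lower density, such that for every (p,i),(q,j) ∈ ℕ² and every (n,m) ∈ E_p(i) × E_q(j): (1) min(E_p(i)) ≥ N_p(i); (2) if n ≠ m, then |n − m| ≥ max(N_p(i), N_q(j)); (3) if (p,i) ≠ (q,j) and n > m, then n ≥ K·m. -/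
open Filter Topology

/-- Lower density of a set of natural numbers:
`liminf card(E ∩ [0,n]) / (n+1)`. -/
noncomputable def lowerDensity (E : Set ℕ) : ℝ :=
  Filter.liminf (fun n : ℕ =>
    (∑ k ∈ Finset.range (n + 1), Set.indicator E (fun _ => (1 : ℝ)) k) / ((n : ℝ) + 1))
    Filter.atTop

def nkk (s k : ℕ) : ℕ := 2 ^ s - 1 + k * 2 ^ (s + 1)

def ES (M : ℕ) (d : ℕ → ℕ) (s : ℕ) : Set ℕ :=
  { m | ∃ k j : ℕ, 2 * d s ≤ M ^ (2 * nkk s k) ∧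
      m = M ^ (2 * nkk s k) + j * d s ∧ m ≤ M ^ (2 * nkk s k + 1) }

lemma nkk_succ (s k : ℕ) : nkk s (k + 1) = nkk s k + 2 ^ (s + 1) := by
  simp [nkk]; ring

lemma nkk_mono (s : ℕ) {k k' : ℕ} (h : k ≤ k') : nkk s k ≤ nkk s k' := by
  unfold nkk
  have := Nat.mul_le_mul_right (2 ^ (s + 1)) h
  omega

lemma nkk_ge (s k : ℕ) : k ≤ nkk s k := by
  unfold nkk
  have h1 : 2 ≤ 2 ^ (s + 1) := by
    have := Nat.one_lt_two_pow (n := s + 1) (by omega); omega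
  have := Nat.mul_le_mul_left k h1
  omega

lemma nkk_add_one (s k : ℕ) : nkk s k + 1 = 2 ^ s * (2 * k + 1) := by
  obtain ⟨A, hA⟩ : ∃ A, 2 ^ s = A + 1 := ⟨2 ^ s - 1, by
    have : 0 < 2 ^ s := Nat.pow_pos (n := s) (by norm_num); omega⟩
  unfold nkk
  rw [pow_succ, hA]
  simp [Nat.add_sub_cancel]
  ring

lemma nkk_inj {s k t k' : ℕ} (h : nkk s k = nkk t k') : s = t ∧ k = k' := by
  have h1 : 2 ^ s * (2 * k + 1) = 2 ^ t * (2 * k' + 1) := by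
    rw [← nkk_add_one, ← nkk_add_one, h]
  have key : ∀ a b u v : ℕ, a < b → 2 ^ a * (2 * u + 1) = 2 ^ b * (2 * v + 1) → False := by
    intro a b u v hab heq
    have h2 : 2 ^ (a + 1) ∣ 2 ^ b := pow_dvd_pow 2 (by omega)
    have h3 : 2 ^ (a + 1) ∣ 2 ^ a * (2 * u + 1) := heq ▸ h2.mul_right _
    rw [pow_succ] at h3
    have h4 : 2 ∣ 2 * u + 1 := by
      have hp : 0 < 2 ^ a := Nat.pow_pos (n := a) (by norm_num)
      rcases h3 with ⟨c, hc⟩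
      have : 2 * u + 1 = 2 * c := by
        have := hc
        rw [mul_assoc] at this
        exact Nat.eq_of_mul_eq_mul_left hp this
      omega
    omega
  rcases lt_trichotomy s t with hst | hst | hst
  · exact absurd h1 (fun h => key s t k k' hst h)
  · subst hst
    have hp : 0 < 2 ^ s := Nat.pow_pos (n := s) (by norm_num)
    have := Nat.eq_of_mul_eq_mul_left hp h1
    exact ⟨rfl, by omega⟩
  · exact absurd h1.symm (fun h => key t s k' k hst h)

lemma ES_min {M : ℕ} {d : ℕ → ℕ} {s n : ℕ} (hn : n ∈ ES M d s) : 2 * d s ≤ n := by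
  obtain ⟨k, j, h1, rfl, _⟩ := hn
  omega

lemma ES_interact {M : ℕ} {d : ℕ → ℕ} (hM : 2 ≤ M) {s t n m : ℕ}
    (hn : n ∈ ES M d s) (hm : m ∈ ES M d t) (hmn : m < n) :
    (s = t ∧ d s ≤ n - m ∧ d t ≤ n - m) ∨
    (M * m ≤ n ∧ d s ≤ n - m ∧ d t ≤ n - m ∧ d t ≤ m) := by
  obtain ⟨k, j, hd1, hne, hnle⟩ := hn
  obtain ⟨k', j', hd2, hme, hmle⟩ := hm
  have hM1 : 1 < M := hM
  rcases lt_trichotomy (nkk s k) (nkk t k') with hab | hab | hab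
  · -- n's block below m's block : contradiction with m < n
    exfalso
    have h1 : M ^ (2 * nkk s k + 1) ≤ M ^ (2 * nkk t k') :=
      Nat.pow_le_pow_right (by omega) (by omega)
    omega
  · -- same block
    obtain ⟨hst, hkk⟩ := nkk_inj hab
    subst hst; subst hkk
    left
    refine ⟨rfl, ?_, ?_⟩ <;>
    · have hjj : j' < j := by
        by_contra hc
        push_neg at hc
        have := Nat.mul_le_mul_right (d s) hc
        omega
      have h2 : (j' + 1) * d s ≤ j * d s := Nat.mul_le_mul_right _ (by omega)
      rw [add_mul, one_mul] at h2
      omega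
  · -- m's block below n's block
    right
    have h1 : M ^ (2 * nkk t k' + 1) * M ≤ M ^ (2 * nkk s k) := by
      rw [← pow_succ]
      exact Nat.pow_le_pow_right (by omega) (by omega)
    have h2 : M * m ≤ M ^ (2 * nkk t k' + 1) * M := by
      rw [mul_comm]
      exact Nat.mul_le_mul_right M hmle
    have h3 : M * m ≤ n := by omega
    have h4 : 2 * m ≤ M * m := Nat.mul_le_mul_right m hM
    refine ⟨h3, by omega, by omega, by omega⟩

lemma ES_density {M : ℕ} {d : ℕ → ℕ} (hM : 2 ≤ M) {s : ℕ} (hds : 1 ≤ d s) :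
    0 < lowerDensity (ES M d s) := by
  classical
  have hM1 : 1 < M := hM
  set e : ℕ := 2 ^ (s + 2) + 1 with he
  set c : ℝ := 1 / (2 * d s * M ^ e) with hc
  have hMpos : (0:ℝ) < M := by positivity
  have hcpos : 0 < c := by
    rw [hc]
    have : (0:ℝ) < d s := by exact_mod_cast hds
    positivity
  have hbig : ∀ k : ℕ, k < M ^ (2 * nkk s k) := by
    intro k
    calc k < 2 ^ k := Nat.lt_two_pow_self (n := k)
      _ ≤ 2 ^ (2 * nkk s k) := Nat.pow_le_pow_right (by norm_num) (by have := nkk_ge s k; omega)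
      _ ≤ M ^ (2 * nkk s k) := Nat.pow_le_pow_left hM _
  have key : ∀ k, 2 * d s ≤ k → 2 * d s ≤ M ^ (2 * nkk s k) := fun k hk =>
    le_trans hk (le_of_lt (hbig k))
  set k0 : ℕ := 2 * d s with hk0def
  set X0 : ℕ := M ^ (2 * nkk s k0 + 1) with hX0
  suffices hle : c ≤ lowerDensity (ES M d s) by linarith
  unfold lowerDensity
  apply Filter.le_liminf_of_le
  · -- cobounded
    apply Filter.isCoboundedUnder_ge_of_le (l := Filter.atTop) (x := 1)
    intro x
    have hnum : (∑ k ∈ Finset.range (x + 1), Set.indicator (ES M d s) (fun _ => (1:ℝ)) k)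
        ≤ (x : ℝ) + 1 := by
      calc (∑ k ∈ Finset.range (x + 1), Set.indicator (ES M d s) (fun _ => (1:ℝ)) k)
          ≤ ∑ _k ∈ Finset.range (x + 1), (1:ℝ) := by
            apply Finset.sum_le_sum
            intro i _
            by_cases h : i ∈ ES M d s
            · rw [Set.indicator_of_mem h]
            · rw [Set.indicator_of_notMem h]; norm_num
        _ = (x : ℝ) + 1 := by simp
    rw [div_le_one (by positivity)]
    exact hnum
  · -- eventually ≥ c
    rw [Filter.eventually_atTop]
    refine ⟨X0, fun x hx => ?_⟩
    set P : ℕ → Prop := fun k => M ^ (2 * nkk s k + 1) ≤ x with hP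
    have hPk0 : P k0 := hx
    have hk0x : k0 ≤ x := by
      have h1 : k0 < M ^ (2 * nkk s k0) := hbig k0
      have h2 : M ^ (2 * nkk s k0) ≤ X0 := Nat.pow_le_pow_right (by omega) (by omega)
      omega
    set Kk : ℕ := Nat.findGreatest P x with hKk
    have hKge : k0 ≤ Kk := Nat.le_findGreatest hk0x hPk0
    have hPK : P Kk := Nat.findGreatest_spec hk0x hPk0
    have hnotP : ¬ P (Kk + 1) := by
      intro hcon
      have hK1x : Kk + 1 ≤ x := by
        have h1 : Kk + 1 < M ^ (2 * nkk s (Kk+1)) := hbig _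
        have h2 : M ^ (2 * nkk s (Kk+1)) ≤ M ^ (2 * nkk s (Kk+1) + 1) :=
          Nat.pow_le_pow_right (by omega) (by omega)
        omega
      exact Nat.findGreatest_is_greatest (Nat.lt_succ_self _) hK1x hcon
    set A : ℕ := M ^ (2 * nkk s Kk) with hA
    have hxlt : x < A * M ^ e := by
      have h1 : x < M ^ (2 * nkk s (Kk + 1) + 1) := by
        by_contra hcon; push_neg at hcon; exact hnotP hcon
      have h2 : M ^ (2 * nkk s (Kk + 1) + 1) = A * M ^ e := by
        rw [hA, ← pow_add]
        congr 1
        rw [nkk_succ, he]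
        have : 2 ^ (s + 2) = 2 * 2 ^ (s + 1) := by ring
        omega
      omega
    have hA2d : 2 * d s ≤ A := key Kk hKge
    set t : ℕ := A / d s with ht
    have ht2 : 2 ≤ t := (Nat.le_div_iff_mul_le (by omega)).mpr (by omega)
    have htA : d s * t ≤ A := by
      rw [ht, mul_comm]
      exact Nat.div_mul_le_self A (d s)
    have hAt : A ≤ 2 * (d s * t) := by
      have h1 := Nat.div_add_mod A (d s)
      have h2 : A % d s < d s := Nat.mod_lt _ (by omega)
      have h3 : d s * 2 ≤ d s * t := Nat.mul_le_mul_left _ ht2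
      rw [ht] at h3 ⊢
      omega
    have hmem : ∀ j < t, (A + j * d s) ∈ ES M d s ∧ A + j * d s ≤ x := by
      intro j hj
      have h4 : (j + 1) * d s ≤ t * d s := Nat.mul_le_mul_right _ (by omega)
      rw [add_mul, one_mul] at h4
      have h5 : t * d s ≤ A := by rw [mul_comm]; exact htA
      have h6 : A * 2 ≤ A * M := Nat.mul_le_mul_left A hM
      have hle : A + j * d s ≤ M ^ (2 * nkk s Kk + 1) := by
        rw [pow_succ, ← hA]
        omega
      exact ⟨⟨Kk, j, hA2d, rfl, hle⟩, le_trans hle hPK⟩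
    -- sum lower bound
    have hsum : (t : ℝ) ≤
        ∑ r ∈ Finset.range (x + 1), Set.indicator (ES M d s) (fun _ => (1:ℝ)) r := by
      set F : Finset ℕ := (Finset.range t).image (fun j => A + j * d s) with hF
      have hFsub : F ⊆ Finset.range (x + 1) := by
        intro r hr
        rw [hF, Finset.mem_image] at hr
        obtain ⟨j, hj, rfl⟩ := hr
        rw [Finset.mem_range] at hj ⊢
        exact Nat.lt_succ_of_le (hmem j hj).2
      have hinj : Function.Injective (fun j => A + j * d s) := by
        intro a b hab
        simp only at hab
        have : a * d s = b * d s := by omega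
        exact Nat.eq_of_mul_eq_mul_right (by omega) this
      have hcard : F.card = t := by
        rw [hF, Finset.card_image_of_injective _ hinj, Finset.card_range]
      have hFval : ∀ r ∈ F, Set.indicator (ES M d s) (fun _ => (1:ℝ)) r = 1 := by
        intro r hr
        rw [hF, Finset.mem_image] at hr
        obtain ⟨j, hj, rfl⟩ := hr
        rw [Finset.mem_range] at hj
        exact Set.indicator_of_mem (hmem j hj).1 _
      calc (t : ℝ) = ∑ r ∈ F, Set.indicator (ES M d s) (fun _ => (1:ℝ)) r := by
            rw [Finset.sum_congr rfl hFval, Finset.sum_const, hcard]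
            simp
        _ ≤ _ := by
            apply Finset.sum_le_sum_of_subset_of_nonneg hFsub
            intro r _ _
            exact Set.indicator_nonneg (fun _ _ => by norm_num) r
    -- finish
    have hx1 : (0:ℝ) < (x : ℝ) + 1 := by positivity
    rw [le_div_iff₀ hx1]
    have h7 : ((x:ℝ) + 1) ≤ (A : ℝ) * (M:ℝ) ^ e := by
      have : (x + 1 : ℕ) ≤ A * M ^ e := hxlt
      exact_mod_cast this
    have hApos : (0:ℝ) < A := by rw [hA]; positivity
    have h9 : c * ((A:ℝ) * (M:ℝ) ^ e) ≤ (t : ℝ) := by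
      have heq : c * ((A:ℝ) * (M:ℝ) ^ e) = (A : ℝ) / (2 * d s) := by
        rw [hc]
        have hds' : (0:ℝ) < d s := by exact_mod_cast hds
        field_simp
      rw [heq, div_le_iff₀ (by positivity)]
      have : (A : ℝ) ≤ 2 * ((d s : ℝ) * t) := by exact_mod_cast hAt
      linarith
    calc c * ((x:ℝ) + 1) ≤ c * ((A:ℝ) * (M:ℝ) ^ e) :=
          mul_le_mul_of_nonneg_left h7 hcpos.le
      _ ≤ (t : ℝ) := h9
      _ ≤ _ := hsum

/-- Lemma 2.2 : refined separated sets with positive lower density. -/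
theorem stmt1 (K : ℝ) (hK : 1 < K) (N : ℕ → ℕ → ℕ)
    (hNmono : ∀ i : ℕ, StrictMono fun p : ℕ => N p i)
    (hNpos : ∀ p i : ℕ, 0 < N p i) :
    ∃ E : ℕ → ℕ → Set ℕ,
      (∀ p i : ℕ, 0 < lowerDensity (E p i)) ∧
      -- (1) min (E p i) ≥ N p i
      (∀ p i : ℕ, ∀ n ∈ E p i, N p i ≤ n) ∧
      -- (2) if n ≠ m then |n − m| ≥ max (N p i) (N q j)
      (∀ p i q j : ℕ, ∀ n ∈ E p i, ∀ m ∈ E q j, n ≠ m →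
        (max (N p i) (N q j) : ℤ) ≤ |(n : ℤ) - (m : ℤ)|) ∧
      -- (3) if (p,i) ≠ (q,j) and n > m then n ≥ K·m
      (∀ p i q j : ℕ, (p, i) ≠ (q, j) → ∀ n ∈ E p i, ∀ m ∈ E q j, m < n →
        K * (m : ℝ) ≤ (n : ℝ)) := by
  set M : ℕ := max 2 ⌈K⌉₊ with hMdef
  have hM2 : 2 ≤ M := le_max_left _ _
  have hKM : K ≤ (M : ℝ) := by
    refine le_trans (Nat.le_ceil K) ?_
    exact_mod_cast le_max_right 2 ⌈K⌉₊
  set d : ℕ → ℕ := fun s => N (Nat.unpair s).1 (Nat.unpair s).2 with hddef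
  have hdpair : ∀ p i, d (Nat.pair p i) = N p i := by
    intro p i; simp [hddef]
  have hd1 : ∀ s, 1 ≤ d s := fun s => hNpos _ _
  refine ⟨fun p i => ES M d (Nat.pair p i), ?_, ?_, ?_, ?_⟩
  · intro p i
    exact ES_density hM2 (hd1 _)
  · intro p i n hn
    have h := ES_min hn
    rw [hdpair] at h
    omega
  · intro p i q j n hn m hm hne
    rcases Nat.lt_trichotomy n m with h | h | h
    · rcases ES_interact hM2 hm hn h with ⟨_, h1, h2⟩ | ⟨_, h1, h2, _⟩ <;>
      · rw [hdpair] at h1 h2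
        have habs : (m : ℤ) - n ≤ |(n : ℤ) - m| := by
          rw [abs_sub_comm]; exact le_abs_self _
        refine le_trans ?_ habs
        have hm1 : N p i ≤ m - n := h2
        have hm2 : N q j ≤ m - n := h1
        rw [max_le_iff]
        constructor <;> omega
    · exact absurd h hne
    · rcases ES_interact hM2 hn hm h with ⟨_, h1, h2⟩ | ⟨_, h1, h2, _⟩ <;>
      · rw [hdpair] at h1 h2
        refine le_trans ?_ (le_abs_self _)
        have hm1 : N p i ≤ n - m := h1
        have hm2 : N q j ≤ n - m := h2
        rw [max_le_iff]
        constructor <;> omega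
  · intro p i q j hne n hn m hm hmn
    rcases ES_interact hM2 hn hm hmn with ⟨hst, _⟩ | ⟨hMle, _⟩
    · exfalso
      apply hne
      have := Nat.pair_eq_pair.mp hst
      exact Prod.ext this.1 this.2
    · have h1 : (M : ℝ) * m ≤ n := by exact_mod_cast hMle
      have h2 : K * m ≤ (M : ℝ) * m :=
        mul_le_mul_of_nonneg_right hKM (by positivity)
      linarith
end

section
/- Let X be a separable F-space (a separable complete metrizable topological vector space) and let (T_i)_{i∈ℕ} be countably many continuous linear operators on X. Assume there exist a dense subset X₀ ⊆ X, mappings S_i : X₀ → X₀ (i ∈ ℕ), and a real number c > 1 such that for every x ∈ X₀: (1) the series ∑_{n≥0} T_i^n(x) and ∑_{n≥0} S_i^n(x) converge unconditionally, uniformly for i ∈ ℕ; (2) the series ∑_{n≥(c−1)m} T_i^m(S_j^{m+n}(x)) converges unconditionally, uniformly for m ∈ ℕ and i ≠ j ∈ ℕ; (3) the series ∑_{(c−1)m/c ≤ n ≤ m} T_i^m(S_j^{m−n}(x)) converges unconditionally, uniformly for m ∈ ℕ and i ≠ j ∈ ℕ; (4) T_i(S_i(x)) = x for every i ∈ ℕ.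 Then there exists a vector x ∈ X which is frequently hypercyclic for every T_i, i ∈ ℕ. -/
open Filter Topology

/-- A family of series `∑_{n ∈ R i} f i n` converges unconditionally, uniformly for `i : ι`. -/
def UnifUncondConv {ι Y : Type*} [AddCommGroup Y] [TopologicalSpace Y]
    (f : ι → ℕ → Y) (R : ι → Set ℕ) : Prop :=
  ∀ V ∈ nhds (0 : Y), ∃ N : ℕ, ∀ i : ι, ∀ F : Finset ℕ,
    (∀ n ∈ F, N ≤ n ∧ n ∈ R i) → (∑ n ∈ F, f i n) ∈ V

/- ### Auxiliary lemmas -/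

/-- Summing finitely many elements, the `j`-th lying in `W (j+1)`, over indices `≥ r`,
lands in `W r`, provided the `W`'s are nested halves. -/
lemma sum_mem_graded {X : Type*} [AddCommGroup X] (W : ℕ → Set X)
    (hsub : ∀ k, W (k + 1) ⊆ W k)
    (hadd : ∀ k, ∀ a ∈ W (k + 1), ∀ b ∈ W (k + 1), a + b ∈ W k)
    (h0 : ∀ k, (0 : X) ∈ W k) :
    ∀ (G : Finset ℕ) (z : ℕ → X) (r : ℕ), (∀ j ∈ G, r ≤ j ∧ z j ∈ W (j + 1)) →
      (∑ j ∈ G, z j) ∈ W r := by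
  classical
  have hmono : ∀ {a b : ℕ}, a ≤ b → W b ⊆ W a := by
    intro a b h
    induction h with
    | refl => exact subset_rfl
    | step _ ih => exact fun x hx => ih (hsub _ hx)
  intro G
  induction G using Finset.strongInductionOn with
  | _ G ih =>
    intro z r hz
    rcases G.eq_empty_or_nonempty with rfl | hne
    · simpa using h0 r
    · have hmin := G.min'_mem hne
      have hr : r ≤ G.min' hne := (hz _ hmin).1
      rw [← Finset.add_sum_erase G z hmin]
      have h1 : z (G.min' hne) ∈ W (G.min' hne + 1) := (hz _ hmin).2
      have h2 : (∑ j ∈ G.erase (G.min' hne), z j) ∈ W (G.min' hne + 1) := by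
        refine ih _ (Finset.erase_ssubset hmin) z _ ?_
        intro j hj
        have hjG := Finset.mem_of_mem_erase hj
        refine ⟨?_, (hz _ hjG).2⟩
        have h3 : G.min' hne ≤ j := Finset.min'_le _ _ hjG
        have h4 : j ≠ G.min' hne := Finset.ne_of_mem_erase hj
        omega
      exact hmono hr (hadd _ _ h1 _ h2)

/-- Uniqueness of the dyadic valuation. -/
lemma two_pow_odd_inj : ∀ s t j j' : ℕ, 2 ^ s * (2 * j + 1) = 2 ^ t * (2 * j' + 1) → s = t := by
  intro s
  induction s with
  | zero =>
    intro t j j' h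
    cases t with
    | zero => rfl
    | succ t =>
      exfalso
      have e2 : (2:ℕ) ^ (t + 1) * (2 * j' + 1) = 2 * (2 ^ t * (2 * j' + 1)) := by ring
      rw [pow_zero, one_mul, e2] at h
      omega
  | succ s ih =>
    intro t j j' h
    cases t with
    | zero =>
      exfalso
      have e1 : (2:ℕ) ^ (s + 1) * (2 * j + 1) = 2 * (2 ^ s * (2 * j + 1)) := by ring
      rw [pow_zero, one_mul, e1] at h
      omega
    | succ t =>
      have e1 : (2:ℕ) ^ (s + 1) * (2 * j + 1) = 2 * (2 ^ s * (2 * j + 1)) := by ring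
      have e2 : (2:ℕ) ^ (t + 1) * (2 * j' + 1) = 2 * (2 ^ t * (2 * j' + 1)) := by ring
      rw [e1, e2] at h
      rw [ih t j j' (Nat.eq_of_mul_eq_mul_left (by norm_num) h)]

/-- If the counting ratio of `E` is eventually at least `ε > 0`, then `E` has positive
lower density. -/
lemma lowerDensity_pos_of_eventually (E : Set ℕ) (ε : ℝ) (n1 : ℕ) (hε : 0 < ε)
    (h : ∀ n, n1 ≤ n →
      ε ≤ (∑ k ∈ Finset.range (n + 1), Set.indicator E (fun _ => (1 : ℝ)) k) / ((n : ℝ) + 1)) :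
    0 < lowerDensity E := by
  have hb : ∀ n : ℕ,
      (∑ k ∈ Finset.range (n + 1), Set.indicator E (fun _ => (1 : ℝ)) k) / ((n : ℝ) + 1) ≤ 1 := by
    intro n
    have h1 : (∑ k ∈ Finset.range (n + 1), Set.indicator E (fun _ => (1 : ℝ)) k)
        ≤ ∑ _k ∈ Finset.range (n + 1), (1 : ℝ) :=
      Finset.sum_le_sum (fun k _ => Set.indicator_apply_le' (fun _ => le_refl 1)
        (fun _ => zero_le_one))
    rw [Finset.sum_const, Finset.card_range] at h1
    rw [div_le_one (by positivity)]
    calc (∑ k ∈ Finset.range (n + 1), Set.indicator E (fun _ => (1 : ℝ)) k)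
        ≤ (n + 1 : ℕ) • (1 : ℝ) := h1
      _ = (n : ℝ) + 1 := by push_cast [nsmul_eq_mul]; ring
  have hbdd : IsBoundedUnder (· ≤ ·) atTop (fun n : ℕ =>
      (∑ k ∈ Finset.range (n + 1), Set.indicator E (fun _ => (1 : ℝ)) k) / ((n : ℝ) + 1)) :=
    isBoundedUnder_of ⟨1, hb⟩
  have hlim := le_liminf_of_le hbdd.isCoboundedUnder_ge (eventually_atTop.2 ⟨n1, h⟩)
  exact lt_of_lt_of_le hε hlim

set_option maxHeartbeats 1000000 in
/-- Corollary 2.4 (common Frequent Hypercyclicity Criterion). -/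
theorem stmt2 {𝕜 X : Type*} [NontriviallyNormedField 𝕜]
    [AddCommGroup X] [UniformSpace X] [IsUniformAddGroup X]
    [Module 𝕜 X] [ContinuousSMul 𝕜 X] [CompleteSpace X]
    [TopologicalSpace.MetrizableSpace X] [TopologicalSpace.SeparableSpace X]
    (T : ℕ → X →L[𝕜] X)
    (X₀ : Set X) (hX₀ : Dense X₀)
    (S : ℕ → X₀ → X₀)
    (c : ℝ) (hc : 1 < c)
    -- (1) ∑_{n≥0} T_i^n(x) and ∑_{n≥0} S_i^n(x) converge unconditionally, uniformly in i
    (h1T : ∀ x : X₀, UnifUncondConv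
      (fun i : ℕ => fun n => ((T i) ^ n) (x : X)) (fun _ => Set.univ))
    (h1S : ∀ x : X₀, UnifUncondConv
      (fun i : ℕ => fun n => (((S i)^[n] x : X₀) : X)) (fun _ => Set.univ))
    -- (2) ∑_{n ≥ (c−1)m} T_i^m (S_j^{m+n}(x)), uniformly in m and i ≠ j
    (h2 : ∀ x : X₀, UnifUncondConv
      (fun v : {v : ℕ × ℕ × ℕ // v.1 ≠ v.2.1} => fun n =>
        ((T v.val.1) ^ v.val.2.2) (((S v.val.2.1)^[v.val.2.2 + n] x : X₀) : X))
      (fun v => {n | (c - 1) * (v.val.2.2 : ℝ) ≤ (n : ℝ)}))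
    -- (3) ∑_{(c−1)m/c ≤ n ≤ m} T_i^m (S_j^{m−n}(x)), uniformly in m and i ≠ j
    (h3 : ∀ x : X₀, UnifUncondConv
      (fun v : {v : ℕ × ℕ × ℕ // v.1 ≠ v.2.1} => fun n =>
        ((T v.val.1) ^ v.val.2.2) (((S v.val.2.1)^[v.val.2.2 - n] x : X₀) : X))
      (fun v => {n | (c - 1) / c * (v.val.2.2 : ℝ) ≤ (n : ℝ) ∧ n ≤ v.val.2.2}))
    -- (4) T_i(S_i(x)) = x
    (h4 : ∀ x : X₀, ∀ i : ℕ, (T i) ((S i x : X₀) : X) = (x : X)) :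
    ∃ x : X, ∀ i : ℕ, ∀ U : Set X, IsOpen U → U.Nonempty →
      0 < lowerDensity {n : ℕ | (((T i) ^ n) x) ∈ U} := by
  classical
  -- ## Second countability and a dense sequence in X₀
  haveI hUcg : (uniformity X).IsCountablyGenerated := by
    rw [uniformity_eq_comap_nhds_zero X]
    exact Filter.comap.isCountablyGenerated _ _
  haveI := UniformSpace.secondCountable_of_separable X
  have hX0ne : X₀.Nonempty := hX₀.nonempty
  haveI : Nonempty X₀ := hX0ne.to_subtype
  obtain ⟨y, hy⟩ := TopologicalSpace.exists_dense_seq X₀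
  have hyd : DenseRange (fun l => ((y l : X₀) : X)) :=
    (hX₀.denseRange_val).comp hy continuous_subtype_val
  -- ## Index bookkeeping
  let iF : ℕ → ℕ := fun s => (Nat.unpair (Nat.unpair s).1).1
  let lF : ℕ → ℕ := fun s => (Nat.unpair (Nat.unpair s).1).2
  have hIF : ∀ i l k : ℕ, ∃ s : ℕ, k ≤ s ∧ iF s = i ∧ lF s = l := by
    intro i l k
    refine ⟨Nat.pair (Nat.pair i l) k, Nat.right_le_pair _ _, ?_, ?_⟩
    · show (Nat.unpair (Nat.unpair (Nat.pair (Nat.pair i l) k)).1).1 = i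
      rw [Nat.unpair_pair]
      simp [Nat.unpair_pair]
    · show (Nat.unpair (Nat.unpair (Nat.pair (Nat.pair i l) k)).1).2 = l
      rw [Nat.unpair_pair]
      simp [Nat.unpair_pair]
  -- ## A graded system of neighborhoods of 0
  obtain ⟨b, hb⟩ := (𝓝 (0 : X)).exists_antitone_basis
  have hbmem : ∀ k, b k ∈ 𝓝 (0 : X) := fun k => hb.toHasBasis.mem_of_mem trivial
  have hhalf : ∀ U : Set X, U ∈ 𝓝 (0 : X) →
      ∃ V : Set X, V ∈ 𝓝 (0 : X) ∧ V ⊆ U ∧ (∀ a ∈ V, ∀ b2 ∈ V, a + b2 ∈ U) ∧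
        (∀ a ∈ V, -a ∈ V) := by
    intro U hU
    obtain ⟨V0, hV0, hV0add⟩ := exists_nhds_zero_half hU
    have h0V : (0 : X) ∈ V0 := mem_of_mem_nhds hV0
    refine ⟨V0 ∩ -V0, Filter.inter_mem hV0 (neg_mem_nhds_zero X hV0), ?_, ?_, ?_⟩
    · intro a ha
      simpa using hV0add a ha.1 0 h0V
    · intro a ha b2 hb2
      exact hV0add a ha.1 b2 hb2.1
    · rintro a ⟨ha1, ha2⟩
      exact ⟨Set.mem_neg.1 ha2, by rw [Set.mem_neg, neg_neg]; exact ha1⟩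
  choose gV hg1 hg2 hg3 hg4 using hhalf
  let Wf : ℕ → {V : Set X // V ∈ 𝓝 (0 : X)} := fun k =>
    Nat.rec ⟨Set.univ, Filter.univ_mem⟩
      (fun k ih => ⟨gV (ih.1 ∩ b k) (Filter.inter_mem ih.2 (hbmem k)), hg1 _ _⟩) k
  let W : ℕ → Set X := fun k => (Wf k).1
  have hWnhds : ∀ k, W k ∈ 𝓝 (0 : X) := fun k => (Wf k).2
  have hW0 : ∀ k, (0 : X) ∈ W k := fun k => mem_of_mem_nhds (hWnhds k)
  have hWsub' : ∀ k, W (k + 1) ⊆ (W k) ∩ b k := fun k =>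
    hg2 ((Wf k).1 ∩ b k) (Filter.inter_mem (Wf k).2 (hbmem k))
  have hWsub : ∀ k, W (k + 1) ⊆ W k := fun k x hx => (hWsub' k hx).1
  have hWadd : ∀ k, ∀ a ∈ W (k + 1), ∀ b2 ∈ W (k + 1), a + b2 ∈ W k := by
    intro k a ha b2 hb2
    exact (hg3 ((Wf k).1 ∩ b k) (Filter.inter_mem (Wf k).2 (hbmem k)) a ha b2 hb2).1
  have hWneg : ∀ k, ∀ a ∈ W k, -a ∈ W k := by
    intro k
    cases k with
    | zero => intro a _; exact Set.mem_univ _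
    | succ k => exact hg4 ((Wf k).1 ∩ b k) (Filter.inter_mem (Wf k).2 (hbmem k))
  have hWbasis : ∀ V ∈ 𝓝 (0 : X), ∃ k, W k ⊆ V := by
    intro V hV
    obtain ⟨k, -, hk⟩ := hb.toHasBasis.mem_iff.1 hV
    exact ⟨k + 1, fun x hx => hk ((hWsub' k hx).2)⟩
  have hWmono : ∀ {a b2 : ℕ}, a ≤ b2 → W b2 ⊆ W a := by
    intro a b2 h
    induction h with
    | refl => exact subset_rfl
    | step _ ih => exact fun x hx => ih (hWsub _ hx)
  have hclosure : ∀ r, closure (W (r + 1)) ⊆ W r := by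
    intro r z hz
    have hV : {w : X | w - z ∈ W (r + 1)} ∈ 𝓝 z := by
      have hc2 : ContinuousAt (fun w : X => w - z) z :=
        (continuous_id.sub continuous_const).continuousAt
      have := hc2.preimage_mem_nhds (by rw [sub_self]; exact hWnhds (r + 1))
      exact this
    obtain ⟨w, hw1, hw2⟩ := mem_closure_iff_nhds.1 hz _ hV
    have he : z = w + -(w - z) := by abel
    rw [he]
    exact hWadd r w hw2 (-(w - z)) (hWneg (r + 1) (w - z) hw1)
  -- ## the integer d ≥ max(2, c)
  obtain ⟨d, hd⟩ : ∃ d : ℕ, d = max 2 ⌈c⌉₊ := ⟨_, rfl⟩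
  have hd2 : 2 ≤ d := by rw [hd]; exact le_max_left _ _
  have hdc : c ≤ (d : ℝ) := by
    rw [hd]
    refine le_trans (Nat.le_ceil c) ?_
    exact_mod_cast le_max_right 2 ⌈c⌉₊
  have hdpow : ∀ {a b2 : ℕ}, a ≤ b2 → d ^ a ≤ d ^ b2 := fun h =>
    Nat.pow_le_pow_right (by omega) h
  have hdpow_lt : ∀ {a b2 : ℕ}, a < b2 → d ^ a < d ^ b2 := fun h =>
    Nat.pow_lt_pow_right (by omega) h
  -- ## thresholds from the hypotheses
  choose N1T hN1T using fun (z : X₀) (r : ℕ) => h1T z (W r) (hWnhds r)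
  choose N1S hN1S using fun (z : X₀) (r : ℕ) => h1S z (W r) (hWnhds r)
  choose N2 hN2 using fun (z : X₀) (r : ℕ) => h2 z (W r) (hWnhds r)
  choose N3 hN3 using fun (z : X₀) (r : ℕ) => h3 z (W r) (hWnhds r)
  let NN : ℕ → ℕ → ℕ := fun t r =>
    max (max (N1T (y (lF t)) r) (N1S (y (lF t)) r)) (max (N2 (y (lF t)) r) (N3 (y (lF t)) r))
  let θ : ℕ → ℕ := fun u2 => 1 + (Finset.range (u2 + 1)).sup (fun t => NN t (3 * u2 + 4))
  have hθ1 : ∀ u2, 1 ≤ θ u2 := fun u2 => Nat.le_add_right 1 _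
  have hθN : ∀ u2 t, t ≤ u2 → NN t (3 * u2 + 4) < θ u2 := by
    intro u2 t h
    have h5 : NN t (3 * u2 + 4) ≤ (Finset.range (u2 + 1)).sup (fun t2 => NN t2 (3 * u2 + 4)) :=
      Finset.le_sup (f := fun t2 => NN t2 (3 * u2 + 4))
        (Finset.mem_range.2 (Nat.lt_succ_of_le h))
    show NN t (3 * u2 + 4) < 1 + (Finset.range (u2 + 1)).sup (fun t2 => NN t2 (3 * u2 + 4))
    omega
  -- ## the sets A s
  let j1 : ℕ → ℕ := fun u2 => θ u2 + 1
  have hθd : ∀ s2, θ s2 ≤ d ^ (2 * j1 s2 - 1) := by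
    intro s2
    calc θ s2 ≤ 2 ^ (θ s2) := le_of_lt (Nat.lt_two_pow_self (n := _))
      _ ≤ 2 ^ (2 * j1 s2 - 1) := Nat.pow_le_pow_right (by omega)
          (show θ s2 ≤ 2 * (θ s2 + 1) - 1 by omega)
      _ ≤ d ^ (2 * j1 s2 - 1) := Nat.pow_le_pow_left hd2 _
  have hj1ge1 : ∀ s2, 1 ≤ j1 s2 := fun s2 => Nat.le_add_left 1 _
  let A : ℕ → Set ℕ := fun s =>
    {n | ∃ k, (∃ j2, k = 2 ^ s * (2 * j2 + 1)) ∧ j1 s ≤ k ∧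
      d ^ (2 * k) ≤ n ∧ n ≤ d ^ (2 * k + 1) ∧ θ s ∣ (n - d ^ (2 * k))}
  have hA_disj : ∀ s t n, n ∈ A s → n ∈ A t → s = t := by
    intro s t n hs ht'
    obtain ⟨k, ⟨j2, hk⟩, -, hlo, hhi, -⟩ := hs
    obtain ⟨k', ⟨j2', hk'⟩, -, hlo', hhi', -⟩ := ht'
    have hkk : k = k' := by
      rcases Nat.lt_trichotomy k k' with h | h | h
      · exfalso; have := hdpow_lt (show 2 * k + 1 < 2 * k' by omega); omega
      · exact h
      · exfalso; have := hdpow_lt (show 2 * k' + 1 < 2 * k by omega); omega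
    subst hkk
    exact two_pow_odd_inj s t j2 j2' (by rw [← hk, ← hk'])
  have hA_lb : ∀ t n, n ∈ A t → θ t ≤ n := by
    intro t n hn
    obtain ⟨k, -, hj1k, hlo, -, -⟩ := hn
    have h1' := hθd t
    have h2' : d ^ (2 * j1 t - 1) ≤ d ^ (2 * k) := hdpow (by omega)
    omega
  -- ## the separation lemma
  have hSep1 : ∀ s t m n, m ∈ A s → n ∈ A t → n < m →
      (θ s ≤ m - n ∧ θ t ≤ m - n) ∧ (s ≠ t → d * n ≤ m) := by
    intro s t m n hm hn hnm
    obtain ⟨k, ⟨j2, hk⟩, hj1k, hlo, hhi, hdvd⟩ := hm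
    obtain ⟨k', ⟨j2', hk'⟩, hj1k', hlo', hhi', hdvd'⟩ := hn
    rcases Nat.lt_trichotomy k k' with hkk | hkk | hkk
    · exfalso
      have h2' : d ^ (2 * k + 1) < d ^ (2 * k') := hdpow_lt (by omega)
      omega
    · -- same slot
      subst hkk
      have hst : s = t := two_pow_odd_inj s t j2 j2' (by rw [← hk, ← hk'])
      subst hst
      have hdd : θ s ∣ m - n := by
        have he : m - n = (m - d ^ (2 * k)) - (n - d ^ (2 * k)) := by omega
        rw [he]; exact Nat.dvd_sub hdvd hdvd'
      have hle : θ s ≤ m - n := Nat.le_of_dvd (by omega) hdd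
      exact ⟨⟨hle, hle⟩, fun h => absurd rfl h⟩
    · -- k' < k : different slots
      have e1 : d ^ (2 * k' + 1) ≤ d ^ (2 * k - 1) := hdpow (by omega)
      have e2 : d ^ (2 * k - 1) * d = d ^ (2 * k) := by
        rw [← pow_succ]; congr 1; omega
      have e3 : 2 * d ^ (2 * k - 1) ≤ d ^ (2 * k) := by
        calc 2 * d ^ (2 * k - 1) = d ^ (2 * k - 1) * 2 := by ring
          _ ≤ d ^ (2 * k - 1) * d := Nat.mul_le_mul_left _ hd2
          _ = d ^ (2 * k) := e2
      have e4 : θ s ≤ d ^ (2 * k - 1) := le_trans (hθd s) (hdpow (by omega))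
      have e5 : θ t ≤ d ^ (2 * k - 1) := le_trans (hθd t) (hdpow (by omega))
      have e6 : d * n ≤ m := by
        calc d * n ≤ d * d ^ (2 * k' + 1) := Nat.mul_le_mul_left d hhi'
          _ = d ^ (2 * k' + 2) := by rw [← pow_succ']
          _ ≤ d ^ (2 * k) := hdpow (by omega)
          _ ≤ m := hlo
      exact ⟨⟨by omega, by omega⟩, fun _ => e6⟩
  -- ## iterate identities from h4
  have key : ∀ (i' : ℕ) (z : X₀) (M : ℕ),
      ((T i') ^ M) (((S i')^[M] z : X₀) : X) = (z : X) := by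
    intro i' z M
    induction M with
    | zero => simp
    | succ M ih =>
      rw [Function.iterate_succ_apply', pow_succ, ContinuousLinearMap.mul_apply, h4, ih]
  have upShift : ∀ (i' : ℕ) (z : X₀) (M n : ℕ), M ≤ n →
      ((T i') ^ M) (((S i')^[n] z : X₀) : X) = (((S i')^[n - M] z : X₀) : X) := by
    intro i' z M n h
    have h2' : (S i')^[n] z = (S i')^[M] ((S i')^[n - M] z) := by
      rw [← Function.iterate_add_apply]
      congr 1
      omega
    rw [h2', key]
  have downShift : ∀ (i' : ℕ) (z : X₀) (M n : ℕ), n ≤ M →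
      ((T i') ^ M) (((S i')^[n] z : X₀) : X) = ((T i') ^ (M - n)) (z : X) := by
    intro i' z M n h
    have hM : M = (M - n) + n := by omega
    conv_lhs => rw [hM]
    rw [pow_add, ContinuousLinearMap.mul_apply, key]
  -- ## the vector as a series
  obtain ⟨tOf, h_mem_tOf⟩ : ∃ tOf : ℕ → ℕ, ∀ n, (∃ t, n ∈ A t) → n ∈ A (tOf n) :=
    ⟨fun n => if h : ∃ t, n ∈ A t then h.choose else 0,
      fun n h => by
        show n ∈ A (if h' : ∃ t, n ∈ A t then h'.choose else 0)
        rw [dif_pos h]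
        exact h.choose_spec⟩
  obtain ⟨u, hu_atom, hu0⟩ : ∃ u : ℕ → X,
      (∀ n, (∃ t, n ∈ A t) → u n = (((S (iF (tOf n)))^[n] (y (lF (tOf n))) : X₀) : X)) ∧
      (∀ n, ¬(∃ t, n ∈ A t) → u n = 0) :=
    ⟨fun n => if h : ∃ t, n ∈ A t then (((S (iF (tOf n)))^[n] (y (lF (tOf n))) : X₀) : X) else 0,
      fun n h => dif_pos h, fun n h => dif_neg h⟩
  have h_u : ∀ t n, n ∈ A t → u n = (((S (iF t))^[n] (y (lF t)) : X₀) : X) := by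
    intro t n hn
    have hat : ∃ t', n ∈ A t' := ⟨t, hn⟩
    have h1' : tOf n = t := hA_disj _ _ _ (h_mem_tOf n hat) hn
    rw [hu_atom n hat, h1']
  let q : ℕ → X := fun m => ∑ n ∈ Finset.range m, u n
  -- tail estimate
  let m0 : ℕ → ℕ := fun k => 1 + (Finset.range (k + 1)).sup (fun t => N1S (y (lF t)) (k + t + 2))
  have hTail : ∀ k m n2, m0 k ≤ m → m ≤ n2 → q n2 - q m ∈ W k := by
    intro k m n2 hm hmn
    have hq2 : q n2 - q m = ∑ n ∈ Finset.Ico m n2, u n := (Finset.sum_Ico_eq_sub u hmn).symm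
    rw [hq2]
    have hzero : ∑ n ∈ (Finset.Ico m n2).filter (fun n => ∃ t, n ∈ A t), u n
        = ∑ n ∈ Finset.Ico m n2, u n :=
      Finset.sum_filter_of_ne (fun n _ hne => by
        by_contra hna
        exact hne (hu0 n hna))
    rw [← hzero]
    set F1 := (Finset.Ico m n2).filter (fun n => ∃ t, n ∈ A t) with hF1
    set β2 : ℕ → ℕ := fun n => k + 1 + tOf n with hβ2
    have hmaps : ∀ n ∈ F1, β2 n ∈ F1.image β2 := fun n hn => Finset.mem_image_of_mem _ hn
    rw [← Finset.sum_fiberwise_of_maps_to hmaps u]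
    refine hWsub k (sum_mem_graded W hWsub hWadd hW0 _ _ (k + 1) ?_)
    intro j hj
    obtain ⟨n₀, hn₀, hn₀β⟩ := Finset.mem_image.1 hj
    obtain ⟨t, ht⟩ : ∃ t, t = tOf n₀ := ⟨_, rfl⟩
    have hjval : j = k + 1 + t := by rw [ht, ← hn₀β]
    refine ⟨by omega, ?_⟩
    have hfib : ∀ n ∈ F1.filter (fun n => β2 n = j), n ∈ A t := by
      intro n hn
      obtain ⟨hnF1, hbn⟩ := Finset.mem_filter.1 hn
      have hAn : n ∈ A (tOf n) := h_mem_tOf n (Finset.mem_filter.1 hnF1).2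
      have h5 : k + 1 + tOf n = j := hbn
      have h6 : tOf n = t := by omega
      rwa [h6] at hAn
    have hsum : ∑ n ∈ F1.filter (fun n => β2 n = j), u n
        = ∑ n ∈ F1.filter (fun n => β2 n = j), (((S (iF t))^[n] (y (lF t)) : X₀) : X) :=
      Finset.sum_congr rfl (fun n hn => h_u t n (hfib n hn))
    rw [hsum]
    rcases le_or_gt t k with htk | htk
    · -- small t
      have hcond : ∀ n ∈ F1.filter (fun n => β2 n = j),
          N1S (y (lF t)) (k + t + 2) ≤ n ∧ n ∈ Set.univ := by
        intro n hn
        refine ⟨?_, Set.mem_univ _⟩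
        have hnm : m ≤ n :=
          (Finset.mem_Ico.1 (Finset.mem_filter.1 (Finset.mem_filter.1 hn).1).1).1
        have hsup : N1S (y (lF t)) (k + t + 2)
            ≤ (Finset.range (k + 1)).sup (fun t2 => N1S (y (lF t2)) (k + t2 + 2)) :=
          Finset.le_sup (f := fun t2 => N1S (y (lF t2)) (k + t2 + 2))
            (Finset.mem_range.2 (Nat.lt_succ_of_le htk))
        have hm0 : m0 k = 1 + (Finset.range (k + 1)).sup (fun t2 => N1S (y (lF t2)) (k + t2 + 2)) :=
          rfl
        omega
      have hres := hN1S (y (lF t)) (k + t + 2) (iF t) _ hcond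
      exact hWmono (show j + 1 ≤ k + t + 2 by omega) hres
    · -- big t
      have hcond : ∀ n ∈ F1.filter (fun n => β2 n = j),
          N1S (y (lF t)) (3 * t + 4) ≤ n ∧ n ∈ Set.univ := by
        intro n hn
        refine ⟨?_, Set.mem_univ _⟩
        have h1' : θ t ≤ n := hA_lb t n (hfib n hn)
        have h2' : N1S (y (lF t)) (3 * t + 4) ≤ NN t (3 * t + 4) :=
          le_trans (le_max_right _ _) (le_max_left _ _)
        have h3' := hθN t t (le_refl t)
        omega
      exact hWmono (show j + 1 ≤ 3 * t + 4 by omega) (hN1S (y (lF t)) (3 * t + 4) (iF t) _ hcond)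
  -- Cauchy sequence and its limit
  have hWb : (𝓝 (0 : X)).HasBasis (fun _ : ℕ => True) W :=
    ⟨fun V => ⟨fun hV => (hWbasis V hV).imp (fun k hk => ⟨trivial, hk⟩),
      fun ⟨k, _, hk⟩ => Filter.mem_of_superset (hWnhds k) hk⟩⟩
  have hub : (uniformity X).HasBasis (fun _ : ℕ => True)
      (fun k => (fun p : X × X => p.2 - p.1) ⁻¹' (W k)) := by
    rw [uniformity_eq_comap_nhds_zero X]
    exact hWb.comap _
  have hCauchy : CauchySeq q := by
    refine (hub.cauchySeq_iff).2 ?_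
    intro k _
    refine ⟨m0 k, fun m hm n2 hn2 => ?_⟩
    rcases le_total m n2 with h | h
    · exact hTail k m n2 hm h
    · have h5 := hTail k n2 m hn2 h
      show q n2 - q m ∈ W k
      rw [show q n2 - q m = -(q m - q n2) by abel]
      exact hWneg _ _ h5
  obtain ⟨x, hx⟩ := cauchySeq_tendsto_of_complete hCauchy
  -- ## the error estimate
  have hErr : ∀ s M, M ∈ A s → ∀ F : Finset ℕ, M ∉ F → (∀ n ∈ F, ∃ t, n ∈ A t) →
      (∑ n ∈ F, ((T (iF s)) ^ M) (u n)) ∈ W (s + 2) := by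
    intro s M hMA F hMF hFatom
    set β : ℕ → ℕ := fun n => (if n < M then 2 * tOf n + 1 else 2 * tOf n) + (s + 2) with hβ
    have hmaps : ∀ n ∈ F, β n ∈ F.image β := fun n hn => Finset.mem_image_of_mem _ hn
    rw [← Finset.sum_fiberwise_of_maps_to hmaps (fun n => ((T (iF s)) ^ M) (u n))]
    refine sum_mem_graded W hWsub hWadd hW0 _ _ (s + 2) ?_
    intro j hj
    obtain ⟨n₀, hn₀, hn₀β⟩ := Finset.mem_image.1 hj
    have hjlb : s + 2 ≤ j := by
      rw [← hn₀β]; simp only [hβ]; split <;> omega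
    refine ⟨hjlb, ?_⟩
    obtain ⟨t, ht⟩ : ∃ t, t = tOf n₀ := ⟨_, rfl⟩
    obtain ⟨u2, hu2⟩ : ∃ u2, u2 = max s t := ⟨_, rfl⟩
    have hsu : s ≤ u2 := by rw [hu2]; exact le_max_left s t
    have htu : t ≤ u2 := by rw [hu2]; exact le_max_right s t
    set G := F.filter (fun n => β n = j) with hG
    have hjub : j ≤ s + 2 * t + 3 := by
      rw [ht, ← hn₀β]; simp only [hβ]; split <;> omega
    have hfib : ∀ n ∈ G, tOf n = t ∧ (n < M ↔ n₀ < M) := by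
      intro n hn
      have hbn := (Finset.mem_filter.1 hn).2
      rw [← hn₀β] at hbn
      simp only [hβ] at hbn
      rcases Nat.lt_or_ge n M with h1' | h1' <;> rcases Nat.lt_or_ge n₀ M with h2' | h2'
      · rw [if_pos h1', if_pos h2'] at hbn; exact ⟨by omega, by omega⟩
      · rw [if_pos h1', if_neg (by omega)] at hbn; exact ⟨by omega, by omega⟩
      · rw [if_neg (by omega), if_pos h2'] at hbn; exact ⟨by omega, by omega⟩
      · rw [if_neg (by omega), if_neg (by omega)] at hbn; exact ⟨by omega, by omega⟩
    have hGA : ∀ n ∈ G, n ∈ A t := by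
      intro n hn
      have h1' := (hfib n hn).1
      have h5 := h_mem_tOf n (hFatom n (Finset.mem_filter.1 hn).1)
      rwa [h1'] at h5
    have hGne : ∀ n ∈ G, n ≠ M := fun n hn h => hMF (h ▸ (Finset.mem_filter.1 hn).1)
    by_cases hdir : n₀ < M
    · -- all n < M
      have hlt : ∀ n ∈ G, n < M := by
        intro n hn
        have h5 := (hfib n hn).2
        have h6 := hGne n hn
        omega
      have hinj : ∀ a ∈ G, ∀ b2 ∈ G, M - a = M - b2 → a = b2 := by
        intro a ha b2 hb2 h
        have := hlt a ha; have := hlt b2 hb2; omega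
      have hsep : ∀ n ∈ G, θ u2 ≤ M - n ∧ (s ≠ t → d * n ≤ M) := by
        intro n hn
        have h0' := hSep1 s t M n hMA (hGA n hn) (hlt n hn)
        refine ⟨?_, h0'.2⟩
        rcases max_choice s t with h | h <;> rw [hu2, h]
        exacts [h0'.1.1, h0'.1.2]
      by_cases hop : iF t = iF s
      · -- same operator, n < M : use h1T
        have hsum : ∑ n ∈ G, ((T (iF s)) ^ M) (u n)
            = ∑ j' ∈ G.image (fun n => M - n), ((T (iF s)) ^ j') ((y (lF t) : X₀) : X) := by
          rw [Finset.sum_image hinj]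
          refine Finset.sum_congr rfl (fun n hn => ?_)
          rw [h_u t n (hGA n hn), ← hop, downShift (iF t) (y (lF t)) M n (le_of_lt (hlt n hn))]
        rw [hsum]
        have hcond : ∀ j' ∈ G.image (fun n => M - n),
            N1T (y (lF t)) (3 * u2 + 4) ≤ j' ∧ j' ∈ Set.univ := by
          intro j' hj'
          obtain ⟨n, hn, rfl⟩ := Finset.mem_image.1 hj'
          refine ⟨?_, Set.mem_univ _⟩
          have h1' := (hsep n hn).1
          have h2' : N1T (y (lF t)) (3 * u2 + 4) ≤ NN t (3 * u2 + 4) :=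
            le_trans (le_max_left _ _) (le_max_left _ _)
          have h3' := hθN u2 t htu
          omega
        exact hWmono (show j + 1 ≤ 3 * u2 + 4 by omega) (hN1T (y (lF t)) (3 * u2 + 4) (iF s) _ hcond)
      · -- different operators, n < M : use h3
        have hts : t ≠ s := fun h => hop (by rw [h])
        have hne2 : iF s ≠ iF t := fun h => hop h.symm
        have hsum : ∑ n ∈ G, ((T (iF s)) ^ M) (u n)
            = ∑ j' ∈ G.image (fun n => M - n),
              ((T (iF s)) ^ M) (((S (iF t))^[M - j'] (y (lF t)) : X₀) : X) := by
          rw [Finset.sum_image hinj]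
          refine Finset.sum_congr rfl (fun n hn => ?_)
          rw [h_u t n (hGA n hn), show M - (M - n) = n from by have := hlt n hn; omega]
        rw [hsum]
        have hcond : ∀ j' ∈ G.image (fun n => M - n),
            N3 (y (lF t)) (3 * u2 + 4) ≤ j' ∧
              ((c - 1) / c * ((M : ℕ) : ℝ) ≤ (j' : ℝ) ∧ j' ≤ M) := by
          intro j' hj'
          obtain ⟨n, hn, rfl⟩ := Finset.mem_image.1 hj'
          have h1' := (hsep n hn).1
          have hdn : d * n ≤ M := (hsep n hn).2 (fun h => hts h.symm)
          have h2' : N3 (y (lF t)) (3 * u2 + 4) ≤ NN t (3 * u2 + 4) :=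
            le_trans (le_max_right _ _) (le_max_right _ _)
          have h3' := hθN u2 t htu
          refine ⟨by omega, ?_, Nat.sub_le M n⟩
          have hnM : n < M := hlt n hn
          have hcast : ((M - n : ℕ) : ℝ) = (M : ℝ) - (n : ℝ) := by
            rw [Nat.cast_sub (le_of_lt hnM)]
          have hcn : c * (n : ℝ) ≤ (M : ℝ) := by
            have hd' : ((d : ℕ) : ℝ) * (n : ℝ) ≤ (M : ℝ) := by exact_mod_cast hdn
            have h6 : c * (n : ℝ) ≤ ((d : ℕ) : ℝ) * (n : ℝ) :=
              mul_le_mul_of_nonneg_right hdc (by positivity)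
            linarith
          rw [hcast, div_mul_eq_mul_div, div_le_iff₀ (by linarith : (0 : ℝ) < c)]
          nlinarith [hcn]
        exact hWmono (show j + 1 ≤ 3 * u2 + 4 by omega) (hN3 (y (lF t)) (3 * u2 + 4) ⟨(iF s, iF t, M), hne2⟩ _ hcond)
    · -- all n > M
      have hgt : ∀ n ∈ G, M < n := by
        intro n hn
        have h5 := (hfib n hn).2
        have h6 := hGne n hn
        omega
      have hinj : ∀ a ∈ G, ∀ b2 ∈ G, a - M = b2 - M → a = b2 := by
        intro a ha b2 hb2 h
        have := hgt a ha; have := hgt b2 hb2; omega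
      have hsep : ∀ n ∈ G, θ u2 ≤ n - M ∧ (s ≠ t → d * M ≤ n) := by
        intro n hn
        have h0' := hSep1 t s n M (hGA n hn) hMA (hgt n hn)
        refine ⟨?_, fun hst => h0'.2 (fun h => hst h.symm)⟩
        rcases max_choice s t with h | h <;> rw [hu2, h]
        exacts [h0'.1.2, h0'.1.1]
      by_cases hop : iF t = iF s
      · -- same operator, n > M : use h1S
        have hsum : ∑ n ∈ G, ((T (iF s)) ^ M) (u n)
            = ∑ j' ∈ G.image (fun n => n - M), (((S (iF t))^[j'] (y (lF t)) : X₀) : X) := by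
          rw [Finset.sum_image hinj]
          refine Finset.sum_congr rfl (fun n hn => ?_)
          rw [h_u t n (hGA n hn), ← hop, upShift (iF t) (y (lF t)) M n (le_of_lt (hgt n hn))]
        rw [hsum]
        have hcond : ∀ j' ∈ G.image (fun n => n - M),
            N1S (y (lF t)) (3 * u2 + 4) ≤ j' ∧ j' ∈ Set.univ := by
          intro j' hj'
          obtain ⟨n, hn, rfl⟩ := Finset.mem_image.1 hj'
          refine ⟨?_, Set.mem_univ _⟩
          have h1' := (hsep n hn).1
          have h2' : N1S (y (lF t)) (3 * u2 + 4) ≤ NN t (3 * u2 + 4) :=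
            le_trans (le_max_right _ _) (le_max_left _ _)
          have h3' := hθN u2 t htu
          omega
        exact hWmono (show j + 1 ≤ 3 * u2 + 4 by omega) (hN1S (y (lF t)) (3 * u2 + 4) (iF t) _ hcond)
      · -- different operators, n > M : use h2
        have hts : t ≠ s := fun h => hop (by rw [h])
        have hne2 : iF s ≠ iF t := fun h => hop h.symm
        have hsum : ∑ n ∈ G, ((T (iF s)) ^ M) (u n)
            = ∑ j' ∈ G.image (fun n => n - M),
              ((T (iF s)) ^ M) (((S (iF t))^[M + j'] (y (lF t)) : X₀) : X) := by
          rw [Finset.sum_image hinj]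
          refine Finset.sum_congr rfl (fun n hn => ?_)
          rw [h_u t n (hGA n hn), show M + (n - M) = n from by have := hgt n hn; omega]
        rw [hsum]
        have hcond : ∀ j' ∈ G.image (fun n => n - M),
            N2 (y (lF t)) (3 * u2 + 4) ≤ j' ∧ (c - 1) * ((M : ℕ) : ℝ) ≤ (j' : ℝ) := by
          intro j' hj'
          obtain ⟨n, hn, rfl⟩ := Finset.mem_image.1 hj'
          have h1' := (hsep n hn).1
          have hdMn : d * M ≤ n := (hsep n hn).2 (fun h => hts h.symm)
          have h2' : N2 (y (lF t)) (3 * u2 + 4) ≤ NN t (3 * u2 + 4) :=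
            le_trans (le_max_left _ _) (le_max_right _ _)
          have h3' := hθN u2 t htu
          refine ⟨by omega, ?_⟩
          have hcast : ((n - M : ℕ) : ℝ) = (n : ℝ) - (M : ℝ) := by
            rw [Nat.cast_sub (le_of_lt (hgt n hn))]
          have hcM : c * (M : ℝ) ≤ (n : ℝ) := by
            have hd' : ((d : ℕ) : ℝ) * (M : ℝ) ≤ (n : ℝ) := by exact_mod_cast hdMn
            have h6 : c * (M : ℝ) ≤ ((d : ℕ) : ℝ) * (M : ℝ) :=
              mul_le_mul_of_nonneg_right hdc (by positivity)
            linarith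
          rw [hcast]
          nlinarith [hcM]
        exact hWmono (show j + 1 ≤ 3 * u2 + 4 by omega) (hN2 (y (lF t)) (3 * u2 + 4) ⟨(iF s, iF t, M), hne2⟩ _ hcond)
  -- ## conclusion
  refine ⟨x, ?_⟩
  intro i U hU hUne
  obtain ⟨l, hl⟩ := hyd.exists_mem_open hU hUne
  have hU0 : (fun w : X => ((y l : X₀) : X) + w) ⁻¹' U ∈ 𝓝 (0 : X) := by
    have hc2 : ContinuousAt (fun w : X => ((y l : X₀) : X) + w) 0 :=
      (continuous_const.add continuous_id).continuousAt
    apply hc2.preimage_mem_nhds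
    rw [add_zero]
    exact hU.mem_nhds hl
  obtain ⟨k, hk⟩ := hWbasis _ hU0
  obtain ⟨s, hks, his, hls⟩ := hIF i l (k + 1)
  subst his
  subst hls
  -- the main estimate
  have hmain : ∀ M, M ∈ A s → ((T (iF s)) ^ M) x ∈ U := by
    intro M hM
    have hTq : Tendsto (fun m => ((T (iF s)) ^ M) (q m)) atTop (𝓝 (((T (iF s)) ^ M) x)) :=
      (((T (iF s)) ^ M).continuous.tendsto x).comp hx
    have hev : ∀ᶠ m in atTop,
        ((T (iF s)) ^ M) (q m) - ((y (lF s) : X₀) : X) ∈ W (s + 2) := by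
      filter_upwards [eventually_ge_atTop (M + 1)] with m hm
      have hq' : ((T (iF s)) ^ M) (q m) = ∑ n ∈ Finset.range m, ((T (iF s)) ^ M) (u n) :=
        map_sum _ _ _
      have hMrange : M ∈ Finset.range m := Finset.mem_range.2 (by omega)
      have hsplit : ∑ n ∈ Finset.range m, ((T (iF s)) ^ M) (u n)
          = ((T (iF s)) ^ M) (u M) + ∑ n ∈ (Finset.range m).erase M, ((T (iF s)) ^ M) (u n) :=
        (Finset.add_sum_erase (Finset.range m) (fun n => ((T (iF s)) ^ M) (u n)) hMrange).symm
      have huM : ((T (iF s)) ^ M) (u M) = ((y (lF s) : X₀) : X) := by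
        rw [h_u s M hM]; exact key (iF s) (y (lF s)) M
      have hzero : ∑ n ∈ ((Finset.range m).erase M).filter (fun n => ∃ t, n ∈ A t),
            ((T (iF s)) ^ M) (u n)
          = ∑ n ∈ (Finset.range m).erase M, ((T (iF s)) ^ M) (u n) :=
        Finset.sum_filter_of_ne (fun n _ hne => by
          by_contra hna
          rw [hu0 n hna, map_zero] at hne
          exact hne rfl)
      have herr := hErr s M hM (((Finset.range m).erase M).filter (fun n => ∃ t, n ∈ A t))
        (fun hMF1 => (Finset.mem_erase.1 (Finset.mem_filter.1 hMF1).1).1 rfl)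
        (fun n hn => (Finset.mem_filter.1 hn).2)
      have heq : ((T (iF s)) ^ M) (q m) - ((y (lF s) : X₀) : X)
          = ∑ n ∈ ((Finset.range m).erase M).filter (fun n => ∃ t, n ∈ A t),
              ((T (iF s)) ^ M) (u n) := by
        rw [hq', hsplit, huM, hzero, add_sub_cancel_left]
      rw [heq]
      exact herr
    have hcl : ((T (iF s)) ^ M) x - ((y (lF s) : X₀) : X) ∈ closure (W (s + 2)) :=
      mem_closure_of_tendsto (hTq.sub_const _) hev
    have hWk : ((T (iF s)) ^ M) x - ((y (lF s) : X₀) : X) ∈ W k :=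
      hWmono (show k ≤ s + 1 by omega) (hclosure (s + 1) hcl)
    have hmem := hk hWk
    have he : ((y (lF s) : X₀) : X) + (((T (iF s)) ^ M) x - ((y (lF s) : X₀) : X))
        = ((T (iF s)) ^ M) x := by abel
    rw [Set.mem_preimage, he] at hmem
    exact hmem
  -- ## positive lower density of A s, hence of the return set
  refine lowerDensity_pos_of_eventually _
    (((θ s * d ^ (2 * (2 ^ (s + 1)) + 1) : ℕ) : ℝ))⁻¹
    (d ^ (2 * (2 ^ s * (2 * (j1 s) + 1)) + 1)) ?_ ?_
  · have h5 : 0 < θ s * d ^ (2 * (2 ^ (s + 1)) + 1) :=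
      Nat.mul_pos (hθ1 s) (Nat.pow_pos (by omega))
    have h6 : (0 : ℝ) < ((θ s * d ^ (2 * (2 ^ (s + 1)) + 1) : ℕ) : ℝ) := by exact_mod_cast h5
    exact inv_pos.2 h6
  · intro n hn
    set P := 2 ^ (s + 1) with hP
    set k0 := 2 ^ s * (2 * (j1 s) + 1) with hk0
    have hP1 : 1 ≤ P := by rw [hP]; exact Nat.one_le_two_pow
    -- find the last slot of A s below n
    set qs := Nat.findGreatest (fun q2 => d ^ (2 * (k0 + P * q2) + 1) ≤ n) n with hqs
    have hQqs : d ^ (2 * (k0 + P * qs) + 1) ≤ n := by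
      have h5 := Nat.findGreatest_spec (P := fun q2 => d ^ (2 * (k0 + P * q2) + 1) ≤ n)
        (Nat.zero_le n) (by simpa using hn)
      rw [← hqs] at h5
      exact h5
    have hqs_lt : qs < n := by
      by_contra hcon
      have hle : qs ≤ n := by rw [hqs]; exact Nat.findGreatest_le n
      have hqn : qs = n := by omega
      have hPn : n ≤ P * n := by
        calc n = 1 * n := (one_mul n).symm
          _ ≤ P * n := Nat.mul_le_mul_right n hP1
      have h1' : n < 2 ^ n := Nat.lt_two_pow_self (n := n)
      have h2' : (2 : ℕ) ^ n ≤ 2 ^ (2 * (k0 + P * n) + 1) :=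
        Nat.pow_le_pow_right (by omega) (by omega)
      have h3' : (2 : ℕ) ^ (2 * (k0 + P * n) + 1) ≤ d ^ (2 * (k0 + P * n) + 1) :=
        Nat.pow_le_pow_left hd2 _
      have h4' : d ^ (2 * (k0 + P * n) + 1) ≤ n := by
        have h6 := hQqs
        rw [hqn] at h6
        exact h6
      omega
    have hnot := Nat.findGreatest_is_greatest (P := fun q2 => d ^ (2 * (k0 + P * q2) + 1) ≤ n)
      (n := n) (k := qs + 1) (by rw [← hqs]; omega) (by omega)
    have hnub : n < d ^ (2 * (k0 + P * qs + P) + 1) := by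
      have hnot2 : ¬ (d ^ (2 * (k0 + P * (qs + 1)) + 1) ≤ n) := hnot
      have he' : k0 + P * (qs + 1) = k0 + P * qs + P := by ring
      rw [he'] at hnot2
      omega
    set k := k0 + P * qs with hkdef
    -- the points of A s in the k-th slot
    have hθpos : 0 < θ s := hθ1 s
    set L := (d ^ (2 * k + 1) - d ^ (2 * k)) / (θ s) with hL
    set pts := (Finset.range (L + 1)).image (fun i2 => d ^ (2 * k) + i2 * (θ s)) with hpts
    have hLmul : L * θ s ≤ d ^ (2 * k + 1) - d ^ (2 * k) := by
      rw [hL]; exact Nat.div_mul_le_self _ _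
    have hpow_le : d ^ (2 * k) ≤ d ^ (2 * k + 1) := hdpow (by omega)
    have h2d : 2 * d ^ (2 * k) ≤ d ^ (2 * k + 1) := by
      calc 2 * d ^ (2 * k) = d ^ (2 * k) * 2 := by ring
        _ ≤ d ^ (2 * k) * d := Nat.mul_le_mul_left _ hd2
        _ = d ^ (2 * k + 1) := (pow_succ d (2 * k)).symm
    have hslotmax : d ^ (2 * k) + L * θ s ≤ d ^ (2 * k + 1) := by
      have h5 := Nat.add_le_add_left hLmul (d ^ (2 * k))
      rwa [Nat.add_sub_cancel' hpow_le] at h5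
    have hptsub : pts ⊆ Finset.range (n + 1) := by
      intro p hp
      obtain ⟨i2, hi2, rfl⟩ := Finset.mem_image.1 hp
      have hi2' : i2 ≤ L := by have := Finset.mem_range.1 hi2; omega
      have h1' : i2 * θ s ≤ L * θ s := Nat.mul_le_mul_right _ hi2'
      refine Finset.mem_range.2 ?_
      have h5 : d ^ (2 * k) + i2 * θ s ≤ d ^ (2 * k + 1) :=
        le_trans (Nat.add_le_add_left h1' _) hslotmax
      exact lt_of_le_of_lt h5 (Nat.lt_succ_of_le hQqs)
    have hptsA : ∀ p ∈ pts, p ∈ A s := by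
      intro p hp
      obtain ⟨i2, hi2, rfl⟩ := Finset.mem_image.1 hp
      have hi2' : i2 ≤ L := by have := Finset.mem_range.1 hi2; omega
      have h1' : i2 * θ s ≤ L * θ s := Nat.mul_le_mul_right _ hi2'
      refine ⟨k, ⟨j1 s + qs, ?_⟩, ?_, ?_, ?_, ?_⟩
      · rw [hkdef, hk0, hP]; ring
      · have h5 : 2 * (j1 s) + 1 ≤ 2 ^ s * (2 * (j1 s) + 1) :=
          Nat.le_mul_of_pos_left _ (Nat.pow_pos (by omega))
        have h6 : k0 ≤ k := by rw [hkdef]; exact Nat.le_add_right _ _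
        omega
      · exact Nat.le_add_right _ _
      · exact le_trans (Nat.add_le_add_left h1' _) hslotmax
      · rw [Nat.add_sub_cancel_left]
        exact dvd_mul_left (θ s) i2
    have hptsE : ∀ p ∈ pts, p ∈ {n2 : ℕ | ((T (iF s)) ^ n2) x ∈ U} :=
      fun p hp => hmain p (hptsA p hp)
    have hcard : pts.card = L + 1 := by
      rw [hpts, Finset.card_image_of_injOn, Finset.card_range]
      intro a _ b2 _ h
      have h5 := Nat.add_left_cancel h
      exact Nat.eq_of_mul_eq_mul_right hθpos h5
    have hsum_pts : ∑ k2 ∈ pts,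
        Set.indicator {n2 : ℕ | ((T (iF s)) ^ n2) x ∈ U} (fun _ => (1 : ℝ)) k2
          = ((L + 1 : ℕ) : ℝ) := by
      rw [Finset.sum_congr rfl (fun p hp => Set.indicator_of_mem (hptsE p hp) _),
        Finset.sum_const, hcard]
      simp
    have hsum_ge : ((L + 1 : ℕ) : ℝ) ≤ ∑ k2 ∈ Finset.range (n + 1),
        Set.indicator {n2 : ℕ | ((T (iF s)) ^ n2) x ∈ U} (fun _ => (1 : ℝ)) k2 := by
      rw [← hsum_pts]
      exact Finset.sum_le_sum_of_subset_of_nonneg hptsub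
        (fun p _ _ => Set.indicator_nonneg (fun _ _ => zero_le_one) _)
    -- numeric estimate
    have hLθ : d ^ (2 * k) < (L + 1) * θ s := by
      have hmodeq := Nat.div_add_mod (d ^ (2 * k + 1) - d ^ (2 * k)) (θ s)
      rw [← hL] at hmodeq
      have hmodlt := Nat.mod_lt (d ^ (2 * k + 1) - d ^ (2 * k)) hθpos
      have hdiff : d ^ (2 * k) ≤ d ^ (2 * k + 1) - d ^ (2 * k) := by omega
      calc d ^ (2 * k) ≤ d ^ (2 * k + 1) - d ^ (2 * k) := hdiff
        _ = θ s * L + (d ^ (2 * k + 1) - d ^ (2 * k)) % θ s := hmodeq.symm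
        _ < θ s * L + θ s := Nat.add_lt_add_left hmodlt _
        _ = (L + 1) * θ s := by ring
    have hchain : n + 1 ≤ (L + 1) * θ s * d ^ (2 * P + 1) := by
      calc n + 1 ≤ d ^ (2 * (k + P) + 1) := hnub
        _ = d ^ (2 * k) * d ^ (2 * P + 1) := by
            rw [← pow_add]; congr 1; ring
        _ ≤ ((L + 1) * θ s) * d ^ (2 * P + 1) := Nat.mul_le_mul_right _ (le_of_lt hLθ)
    rw [le_div_iff₀ (by positivity : (0 : ℝ) < (n : ℝ) + 1)]
    have hC : ((n : ℝ) + 1) ≤ ((L + 1 : ℕ) : ℝ) * ((θ s * d ^ (2 * P + 1) : ℕ) : ℝ) := by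
      have h9 : (n + 1 : ℕ) ≤ (L + 1) * (θ s * d ^ (2 * P + 1)) := by
        rw [← mul_assoc]; exact hchain
      exact_mod_cast h9
    have hCpos : (0 : ℝ) < ((θ s * d ^ (2 * P + 1) : ℕ) : ℝ) := by
      have h5 : 0 < θ s * d ^ (2 * P + 1) := Nat.mul_pos (hθ1 s) (Nat.pow_pos (by omega))
      exact_mod_cast h5
    calc (((θ s * d ^ (2 * P + 1) : ℕ) : ℝ))⁻¹ * ((n : ℝ) + 1)
        ≤ (((θ s * d ^ (2 * P + 1) : ℕ) : ℝ))⁻¹ *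
            (((L + 1 : ℕ) : ℝ) * ((θ s * d ^ (2 * P + 1) : ℕ) : ℝ)) :=
          mul_le_mul_of_nonneg_left hC (by positivity)
      _ = ((L + 1 : ℕ) : ℝ) := by field_simp
      _ ≤ _ := hsum_ge
end

section
/- Let X be a separable Banach space, T a bounded linear operator on X, and α = (α_k)_{k≥1} a completely admissible sequence. If φ_α satisfies the Δ₂-condition, then FHC(T) = FHC_α(T). -/
open Filter Topology

/-- A sequence `α = (α_k)_{k ≥ 1}` is completely admissible: non-negative,
non-decreasing, with divergent series, and `α_n / ∑_{j=1}^n α_j → 0`. -/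
def CompletelyAdmissible (α : ℕ → ℝ) : Prop :=
  (∀ k, 0 ≤ α k) ∧ (∀ k l : ℕ, k ≤ l → α k ≤ α l) ∧
    Filter.Tendsto (fun n : ℕ => ∑ k ∈ Finset.Icc 1 n, α k) Filter.atTop Filter.atTop ∧
    Filter.Tendsto (fun n : ℕ => α n / ∑ k ∈ Finset.Icc 1 n, α k) Filter.atTop (nhds 0)

/-- The lower `α`-density of `E ⊆ ℕ`:
`liminf (∑_{k=1}^n α_k 1_E(k)) / (∑_{k=1}^n α_k)`. -/
noncomputable def alphaLowerDensity (α : ℕ → ℝ) (E : Set ℕ) : ℝ :=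
  Filter.liminf (fun n : ℕ =>
    (∑ k ∈ Finset.Icc 1 n, Set.indicator E α k) / ∑ k ∈ Finset.Icc 1 n, α k)
    Filter.atTop

/-- `φ_α(x) = ∑_{k ≤ x} α_k`. -/
noncomputable def phiAlpha (α : ℕ → ℝ) (x : ℝ) : ℝ :=
  ∑ k ∈ Finset.Icc 1 ⌊x⌋₊, α k

/-- `φ_α` satisfies the Δ₂-condition: `φ_α(2x) ≤ K φ_α(x)` for all large `x`. -/
def Delta2 (α : ℕ → ℝ) : Prop :=
  ∃ K : ℝ, 0 < K ∧ ∃ x₀ : ℝ, ∀ x : ℝ, x₀ ≤ x → phiAlpha α (2 * x) ≤ K * phiAlpha α x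

/-- The set of frequently hypercyclic vectors of an operator. -/
noncomputable def FHC {X : Type*} [NormedAddCommGroup X] [NormedSpace ℝ X]
    (T : X →L[ℝ] X) : Set X :=
  {x | ∀ U : Set X, IsOpen U → U.Nonempty → 0 < lowerDensity {n : ℕ | (T ^ n) x ∈ U}}

/-- The set of `α`-frequently hypercyclic vectors of an operator. -/
noncomputable def FHCalpha {X : Type*} [NormedAddCommGroup X] [NormedSpace ℝ X]
    (α : ℕ → ℝ) (T : X →L[ℝ] X) : Set X :=
  {x | ∀ U : Set X, IsOpen U → U.Nonempty →
    0 < alphaLowerDensity α {n : ℕ | (T ^ n) x ∈ U}}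

section AuxDensity

open Filter Topology
open scoped Classical

variable {α : ℕ → ℝ}

private lemma sum_head_le' (hmono : Monotone α) :
    ∀ F : Finset ℕ, (∀ k ∈ F, 1 ≤ k) →
      ∑ k ∈ Finset.Icc 1 F.card, α k ≤ ∑ k ∈ F, α k := by
  intro F
  induction F using Finset.strongInduction with
  | _ F ih =>
    intro hF
    rcases F.eq_empty_or_nonempty with rfl | hne
    · simp
    · set M := F.max' hne with hMdef
      have hMmem : M ∈ F := F.max'_mem hne
      have hsub : F ⊆ Finset.Icc 1 M := fun k hk =>
        Finset.mem_Icc.mpr ⟨hF k hk, F.le_max' k hk⟩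
      have hcard : F.card ≤ M := by
        have := Finset.card_le_card hsub
        simpa using this
      obtain ⟨m, hm⟩ : ∃ m, F.card = m + 1 :=
        ⟨F.card - 1, by have := Finset.card_pos.mpr hne; omega⟩
      have hcard' : (F.erase M).card = m := by
        rw [Finset.card_erase_of_mem hMmem, hm]; omega
      have hIH := ih (F.erase M) (Finset.erase_ssubset hMmem)
        (fun k hk => hF k (Finset.mem_of_mem_erase hk))
      rw [hcard'] at hIH
      have hsplit : ∑ k ∈ Finset.Icc 1 (m + 1), α k
          = (∑ k ∈ Finset.Icc 1 m, α k) + α (m + 1) := by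
        rw [← Finset.sum_Icc_succ_top (by omega : 1 ≤ m + 1)]
      rw [hm, hsplit]
      have : α (m + 1) ≤ α M := hmono (by omega)
      calc (∑ k ∈ Finset.Icc 1 m, α k) + α (m + 1)
          ≤ (∑ k ∈ F.erase M, α k) + α M := add_le_add hIH this
        _ = ∑ k ∈ F, α k := Finset.sum_erase_add F α hMmem

private lemma S_nonneg' (hnn : ∀ k, 0 ≤ α k) (n : ℕ) :
    0 ≤ ∑ k ∈ Finset.Icc 1 n, α k :=
  Finset.sum_nonneg fun k _ => hnn k

private lemma S_mono' (hnn : ∀ k, 0 ≤ α k) {m n : ℕ} (h : m ≤ n) :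
    ∑ k ∈ Finset.Icc 1 m, α k ≤ ∑ k ∈ Finset.Icc 1 n, α k :=
  Finset.sum_le_sum_of_subset_of_nonneg
    (Finset.Icc_subset_Icc_right h) (fun k _ _ => hnn k)

private lemma delta2_nat (hnn : ∀ k, 0 ≤ α k) (hΔ : Delta2 α) :
    ∃ K : ℝ, 2 ≤ K ∧ ∃ n₀ : ℕ, ∀ n : ℕ, n₀ ≤ n →
      (∑ k ∈ Finset.Icc 1 (2 * n), α k) ≤ K * ∑ k ∈ Finset.Icc 1 n, α k := by
  obtain ⟨K, hK, x₀, h⟩ := hΔ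
  refine ⟨max K 2, le_max_right _ _, ⌈x₀⌉₊, fun n hn => ?_⟩
  have hx : x₀ ≤ (n : ℝ) := le_trans (Nat.le_ceil x₀) (by exact_mod_cast hn)
  have h2 := h n hx
  have e1 : phiAlpha α (2 * (n : ℝ)) = ∑ k ∈ Finset.Icc 1 (2 * n), α k := by
    unfold phiAlpha
    have : (2 : ℝ) * (n : ℝ) = ((2 * n : ℕ) : ℝ) := by push_cast; ring
    rw [this, Nat.floor_natCast]
  have e2 : phiAlpha α (n : ℝ) = ∑ k ∈ Finset.Icc 1 n, α k := by
    unfold phiAlpha; rw [Nat.floor_natCast]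
  rw [e1, e2] at h2
  calc (∑ k ∈ Finset.Icc 1 (2 * n), α k) ≤ K * ∑ k ∈ Finset.Icc 1 n, α k := h2
    _ ≤ max K 2 * ∑ k ∈ Finset.Icc 1 n, α k :=
        mul_le_mul_of_nonneg_right (le_max_left _ _) (S_nonneg' hnn n)

private lemma S_pow' {K : ℝ} {n₀ : ℕ} (hK : 2 ≤ K)
    (hd : ∀ n : ℕ, n₀ ≤ n →
      (∑ k ∈ Finset.Icc 1 (2 * n), α k) ≤ K * ∑ k ∈ Finset.Icc 1 n, α k)
    (j : ℕ) : ∀ m : ℕ, n₀ ≤ m →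
      (∑ k ∈ Finset.Icc 1 (2 ^ j * m), α k) ≤ K ^ j * ∑ k ∈ Finset.Icc 1 m, α k := by
  induction j with
  | zero => intro m _; simp
  | succ j ih =>
    intro m hm
    have h1 : n₀ ≤ 2 ^ j * m :=
      le_trans hm (Nat.le_mul_of_pos_left m (pow_pos (by norm_num : (0:ℕ) < 2) j))
    have h2 := hd (2 ^ j * m) h1
    have h3 : 2 ^ (j + 1) * m = 2 * (2 ^ j * m) := by ring
    rw [h3]
    calc (∑ k ∈ Finset.Icc 1 (2 * (2 ^ j * m)), α k)
        ≤ K * ∑ k ∈ Finset.Icc 1 (2 ^ j * m), α k := h2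
      _ ≤ K * (K ^ j * ∑ k ∈ Finset.Icc 1 m, α k) :=
          mul_le_mul_of_nonneg_left (ih m hm) (by linarith)
      _ = K ^ (j + 1) * ∑ k ∈ Finset.Icc 1 m, α k := by ring

private lemma nalpha_le' (hmono : Monotone α) {K : ℝ} {n₀ : ℕ}
    (hd : ∀ n : ℕ, n₀ ≤ n →
      (∑ k ∈ Finset.Icc 1 (2 * n), α k) ≤ K * ∑ k ∈ Finset.Icc 1 n, α k)
    {n : ℕ} (hn : n₀ ≤ n) :
    (n : ℝ) * α n ≤ (K - 1) * ∑ k ∈ Finset.Icc 1 n, α k := by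
  have hsplit : ∑ k ∈ Finset.Icc 1 (2 * n), α k
      = (∑ k ∈ Finset.Icc 1 n, α k) + ∑ k ∈ Finset.Icc (n + 1) (2 * n), α k := by
    rw [← Finset.sum_union (by simp [Finset.disjoint_left]; omega)]
    congr 1
    ext k
    simp only [Finset.mem_union, Finset.mem_Icc]
    omega
  have hlb : (n : ℝ) * α n ≤ ∑ k ∈ Finset.Icc (n + 1) (2 * n), α k := by
    have hcard : (Finset.Icc (n + 1) (2 * n)).card = n := by
      rw [Nat.card_Icc]; omega
    have := Finset.card_nsmul_le_sum (Finset.Icc (n + 1) (2 * n)) α (α n)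
      (fun k hk => hmono (by have := (Finset.mem_Icc.mp hk).1; omega))
    rw [hcard, nsmul_eq_mul] at this
    exact this
  have h2 := hd n hn
  linarith

private lemma ind_sum_eq (E : Set ℕ) (n : ℕ) :
    ∑ k ∈ Finset.Icc 1 n, Set.indicator E α k
      = ∑ k ∈ (Finset.Icc 1 n).filter (fun k => k ∈ E), α k := by
  rw [Finset.sum_filter]
  exact Finset.sum_congr rfl fun k _ => Set.indicator_apply E α k

private lemma ind_one_sum_eq (E : Set ℕ) (n : ℕ) :
    ∑ k ∈ Finset.Icc 1 n, Set.indicator E (fun _ => (1 : ℝ)) k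
      = (((Finset.Icc 1 n).filter (fun k => k ∈ E)).card : ℝ) := by
  rw [Finset.sum_indicator_eq_sum_filter]
  simp

private lemma range_split (f : ℕ → ℝ) (n : ℕ) :
    ∑ k ∈ Finset.range (n + 1), f k = f 0 + ∑ k ∈ Finset.Icc 1 n, f k := by
  induction n with
  | zero => simp
  | succ n ih =>
    rw [Finset.sum_range_succ, ih, Finset.sum_Icc_succ_top (by omega : 1 ≤ n + 1)]
    ring

end AuxDensity

section MainDensity

open Filter Topology
open scoped Classical

variable {α : ℕ → ℝ}

private lemma ind_one_le_one (E : Set ℕ) (k : ℕ) :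
    Set.indicator E (fun _ => (1 : ℝ)) k ≤ 1 := by
  by_cases hk : k ∈ E <;> simp [hk]

private lemma nat_ratio_nonneg (E : Set ℕ) (n : ℕ) :
    0 ≤ (∑ k ∈ Finset.range (n + 1), Set.indicator E (fun _ => (1 : ℝ)) k) / ((n : ℝ) + 1) :=
  div_nonneg (Finset.sum_nonneg fun k _ => Set.indicator_nonneg (fun _ _ => zero_le_one) k)
    (by positivity)

private lemma nat_ratio_le_one (E : Set ℕ) (n : ℕ) :
    (∑ k ∈ Finset.range (n + 1), Set.indicator E (fun _ => (1 : ℝ)) k) / ((n : ℝ) + 1) ≤ 1 := by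
  rw [div_le_one (by positivity)]
  calc (∑ k ∈ Finset.range (n + 1), Set.indicator E (fun _ => (1 : ℝ)) k)
      ≤ ∑ k ∈ Finset.range (n + 1), 1 :=
        Finset.sum_le_sum fun k _ => ind_one_le_one E k
    _ = (n : ℝ) + 1 := by simp

private lemma alpha_ratio_nonneg (hnn : ∀ k, 0 ≤ α k) (E : Set ℕ) (n : ℕ) :
    0 ≤ (∑ k ∈ Finset.Icc 1 n, Set.indicator E α k) / ∑ k ∈ Finset.Icc 1 n, α k :=
  div_nonneg (Finset.sum_nonneg fun k _ => Set.indicator_nonneg (fun k _ => hnn k) k)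
    (S_nonneg' hnn n)

private lemma alpha_ratio_le_one (hnn : ∀ k, 0 ≤ α k) (E : Set ℕ) (n : ℕ) :
    (∑ k ∈ Finset.Icc 1 n, Set.indicator E α k) / ∑ k ∈ Finset.Icc 1 n, α k ≤ 1 := by
  rcases eq_or_lt_of_le (S_nonneg' hnn n) with h | h
  · rw [← h, div_zero]; exact zero_le_one
  · rw [div_le_one h]
    exact Finset.sum_le_sum fun k _ => Set.indicator_le_self' (fun k _ => hnn k) k

/-- If the natural lower density is positive, so is the `α`-lower density. -/
private lemma adens_pos_of_dens_pos (hα : CompletelyAdmissible α) (hΔ : Delta2 α)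
    (E : Set ℕ) (h : 0 < lowerDensity E) : 0 < alphaLowerDensity α E := by
  obtain ⟨hnn, hmono', hdiv, -⟩ := hα
  have hmono : Monotone α := monotone_nat_of_le_succ (fun n => hmono' n (n+1) (by omega))
  obtain ⟨K, hK2, n₀, hd⟩ := delta2_nat hnn hΔ
  set c : ℝ := lowerDensity E / 2 with hcdef
  have hc : 0 < c := by positivity
  -- eventually the natural-density ratio exceeds c
  have hev1 : ∀ᶠ n in (atTop : Filter ℕ), c <
      (∑ k ∈ Finset.range (n + 1), Set.indicator E (fun _ => (1 : ℝ)) k) / ((n : ℝ) + 1) := by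
    apply eventually_lt_of_lt_liminf
    · exact half_lt_self h
    · exact Filter.isBoundedUnder_of ⟨0, fun n => nat_ratio_nonneg E n⟩
  obtain ⟨j, hj⟩ : ∃ j : ℕ, 2 / c < (2 : ℝ) ^ j := pow_unbounded_of_one_lt _ one_lt_two
  have hev2 : ∀ᶠ n in (atTop : Filter ℕ), 0 < ∑ k ∈ Finset.Icc 1 n, α k :=
    hdiv.eventually_gt_atTop 0
  have hev3 : ∀ᶠ n : ℕ in atTop, max (n₀ : ℝ) 1 ≤ c / 2 * n :=
    (Filter.Tendsto.const_mul_atTop (by positivity : (0:ℝ) < c / 2)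
      tendsto_natCast_atTop_atTop).eventually_ge_atTop _
  have hKpos : (0 : ℝ) < K ^ j := pow_pos (by linarith) j
  have key : ∀ᶠ n : ℕ in atTop, (K ^ j)⁻¹ ≤
      (∑ k ∈ Finset.Icc 1 n, Set.indicator E α k) / ∑ k ∈ Finset.Icc 1 n, α k := by
    filter_upwards [hev1, hev2, hev3] with n h1 h2 h3
    set m : ℕ := ((Finset.Icc 1 n).filter (fun k => k ∈ E)).card with hmdef
    -- numerator of natural density is at most 1 + m
    have hnum : c * ((n : ℝ) + 1) ≤ 1 + (m : ℝ) := by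
      have := (div_le_div_iff₀ (by positivity) (by positivity)).mp
        (le_of_lt (lt_of_lt_of_le h1 (le_refl _)))
      have hle : (∑ k ∈ Finset.range (n + 1), Set.indicator E (fun _ => (1 : ℝ)) k)
          ≤ 1 + (m : ℝ) := by
        rw [range_split, ← ind_one_sum_eq E n]
        have : Set.indicator E (fun _ => (1 : ℝ)) 0 ≤ 1 := ind_one_le_one E 0
        linarith
      nlinarith [mul_pos hc (by positivity : (0:ℝ) < (n:ℝ) + 1),
        (lt_div_iff₀ (by positivity : (0:ℝ) < (n:ℝ)+1)).mp h1]
    have hm2 : c / 2 * (n : ℝ) ≤ (m : ℝ) := by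
      have h1' : (1 : ℝ) ≤ c / 2 * n := le_trans (le_max_right _ _) h3
      nlinarith
    have hmn₀ : (n₀ : ℕ) ≤ m := by
      have : (n₀ : ℝ) ≤ (m : ℝ) := le_trans (le_trans (le_max_left _ _) h3) hm2
      exact_mod_cast this
    -- the α-weighted count is at least S m
    have hAm : (∑ k ∈ Finset.Icc 1 m, α k) ≤ ∑ k ∈ Finset.Icc 1 n, Set.indicator E α k := by
      rw [ind_sum_eq]
      exact sum_head_le' hmono _ (fun k hk => (Finset.mem_Icc.mp (Finset.mem_filter.mp hk).1).1)
    -- n ≤ 2^j * m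
    have hn2jm : n ≤ 2 ^ j * m := by
      have : (n : ℝ) ≤ (2 : ℝ) ^ j * m := by
        have e : (2 / c) * (c / 2 * (n : ℝ)) = n := by field_simp
        calc (n : ℝ) = (2 / c) * (c / 2 * (n : ℝ)) := e.symm
          _ ≤ (2 : ℝ) ^ j * m := by
              apply mul_le_mul (le_of_lt hj) hm2 (by positivity) (by positivity)
      exact_mod_cast (by push_cast; exact this : (n : ℝ) ≤ ((2 ^ j * m : ℕ) : ℝ))
    have hSS : (∑ k ∈ Finset.Icc 1 n, α k) ≤ K ^ j * ∑ k ∈ Finset.Icc 1 m, α k :=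
      le_trans (S_mono' hnn hn2jm) (S_pow' hK2 hd j m hmn₀)
    rw [le_div_iff₀ h2, inv_mul_le_iff₀ hKpos]
    calc (∑ k ∈ Finset.Icc 1 n, α k) ≤ K ^ j * ∑ k ∈ Finset.Icc 1 m, α k := hSS
      _ ≤ K ^ j * ∑ k ∈ Finset.Icc 1 n, Set.indicator E α k :=
          mul_le_mul_of_nonneg_left hAm (le_of_lt hKpos)
  have : (K ^ j)⁻¹ ≤ alphaLowerDensity α E :=
    Filter.le_liminf_of_le
      (Filter.isCoboundedUnder_ge_of_le atTop (fun n => alpha_ratio_le_one hnn E n)) key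
  linarith [inv_pos.mpr hKpos]

/-- If the `α`-lower density is positive, so is the natural lower density. -/
private lemma dens_pos_of_adens_pos (hα : CompletelyAdmissible α) (hΔ : Delta2 α)
    (E : Set ℕ) (h : 0 < alphaLowerDensity α E) : 0 < lowerDensity E := by
  obtain ⟨hnn, hmono', hdiv, -⟩ := hα
  have hmono : Monotone α := monotone_nat_of_le_succ (fun n => hmono' n (n+1) (by omega))
  obtain ⟨K, hK2, n₀, hd⟩ := delta2_nat hnn hΔ
  set c : ℝ := alphaLowerDensity α E / 2 with hcdef
  have hc : 0 < c := by positivity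
  have hev1 : ∀ᶠ n in (atTop : Filter ℕ), c <
      (∑ k ∈ Finset.Icc 1 n, Set.indicator E α k) / ∑ k ∈ Finset.Icc 1 n, α k := by
    apply eventually_lt_of_lt_liminf
    · exact half_lt_self h
    · exact Filter.isBoundedUnder_of ⟨0, fun n => alpha_ratio_nonneg hnn E n⟩
  have hev2 : ∀ᶠ n in (atTop : Filter ℕ), 0 < ∑ k ∈ Finset.Icc 1 n, α k :=
    hdiv.eventually_gt_atTop 0
  have hKm1 : (0 : ℝ) < K - 1 := by linarith
  set d : ℝ := c / (2 * (K - 1)) with hddef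
  have hdpos : 0 < d := by positivity
  have key : ∀ᶠ n : ℕ in atTop, d ≤
      (∑ k ∈ Finset.range (n + 1), Set.indicator E (fun _ => (1 : ℝ)) k) / ((n : ℝ) + 1) := by
    filter_upwards [hev1, hev2, eventually_ge_atTop (max n₀ 1)] with n h1 h2 h3
    set m : ℕ := ((Finset.Icc 1 n).filter (fun k => k ∈ E)).card with hmdef
    have hn₀ : n₀ ≤ n := le_trans (le_max_left _ _) h3
    have hn1 : (1 : ℝ) ≤ (n : ℝ) := by exact_mod_cast le_trans (le_max_right _ _) h3
    -- A n ≥ c * S n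
    have hA : c * (∑ k ∈ Finset.Icc 1 n, α k) ≤ ∑ k ∈ Finset.Icc 1 n, Set.indicator E α k := by
      have := (lt_div_iff₀ h2).mp h1
      linarith
    -- A n ≤ m * α n
    have hAm : (∑ k ∈ Finset.Icc 1 n, Set.indicator E α k) ≤ (m : ℝ) * α n := by
      rw [ind_sum_eq]
      have := Finset.sum_le_card_nsmul ((Finset.Icc 1 n).filter (fun k => k ∈ E)) α (α n)
        (fun k hk => hmono (Finset.mem_Icc.mp (Finset.mem_filter.mp hk).1).2)
      rw [nsmul_eq_mul] at this
      exact this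
    have hna := nalpha_le' hmono hd hn₀
    -- c * n ≤ m * (K - 1)
    have hcn : c * (n : ℝ) ≤ (m : ℝ) * (K - 1) := by
      have hstep : c * (n : ℝ) * (∑ k ∈ Finset.Icc 1 n, α k)
          ≤ (m : ℝ) * (K - 1) * (∑ k ∈ Finset.Icc 1 n, α k) := by
        have e1 : c * (∑ k ∈ Finset.Icc 1 n, α k) * (n : ℝ)
            ≤ ((m : ℝ) * α n) * (n : ℝ) :=
          mul_le_mul_of_nonneg_right (le_trans hA hAm) (by positivity)
        have e2 : (m : ℝ) * ((n : ℝ) * α n) ≤ (m : ℝ) * ((K - 1) * ∑ k ∈ Finset.Icc 1 n, α k) :=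
          mul_le_mul_of_nonneg_left hna (by positivity)
        nlinarith
      exact le_of_mul_le_mul_right hstep h2
    -- numerator ≥ m
    have hnum : (m : ℝ) ≤ ∑ k ∈ Finset.range (n + 1), Set.indicator E (fun _ => (1 : ℝ)) k := by
      rw [range_split, ← ind_one_sum_eq E n]
      have : (0 : ℝ) ≤ Set.indicator E (fun _ => (1 : ℝ)) 0 :=
        Set.indicator_nonneg (fun _ _ => zero_le_one) 0
      linarith
    rw [le_div_iff₀ (by positivity)]
    have : d * ((n : ℝ) + 1) ≤ (m : ℝ) := by
      rw [hddef, div_mul_eq_mul_div, div_le_iff₀ (by positivity)]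
      nlinarith
    linarith
  have : d ≤ lowerDensity E :=
    Filter.le_liminf_of_le
      (Filter.isCoboundedUnder_ge_of_le atTop (fun n => nat_ratio_le_one E n)) key
  linarith

end MainDensity

/-- Theorem 4.2 (1): if `φ_α` satisfies the Δ₂-condition then
`FHC(T) = FHC_α(T)`. -/
theorem stmt15 {X : Type*} [NormedAddCommGroup X] [NormedSpace ℝ X]
    [CompleteSpace X] [TopologicalSpace.SeparableSpace X]
    (T : X →L[ℝ] X) (α : ℕ → ℝ) (hα : CompletelyAdmissible α)
    (hΔ : Delta2 α) :
    FHC T = FHCalpha α T := by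
  ext x
  simp only [FHC, FHCalpha, Set.mem_setOf_eq]
  constructor
  · intro h U hU hUne
    exact adens_pos_of_dens_pos hα hΔ _ (h U hU hUne)
  · intro h U hU hUne
    exact dens_pos_of_adens_pos hα hΔ _ (h U hU hUne)
end

section
/- Let α = (α_k)_{k≥1} be a completely admissible sequence and let A ⊆ ℕ be a set of positive lower α-density. Let I_1, …, I_q ⊆ ℕ be sets with ⋃_{j=1}^q I_j = ℕ, and let n_1, …, n_q ∈ ℕ. Then the set B := ⋃_{j=1}^q (n_j + (A ∩ I_j)) has positive lower α-density, where n + E denotes the translate {n + k : k ∈ E}. -/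
open Filter Topology

/-- Lemma 4.6: if `A` has positive lower `α`-density, `I_1, …, I_q` cover `ℕ` and
`n_1, …, n_q ∈ ℕ`, then `B = ⋃_j (n_j + A ∩ I_j)` has positive lower `α`-density. -/
theorem stmt18 (α : ℕ → ℝ) (hα : CompletelyAdmissible α)
    (A : Set ℕ) (hA : 0 < alphaLowerDensity α A)
    (q : ℕ) (I : Fin q → Set ℕ) (hI : (⋃ j, I j) = Set.univ)
    (nn : Fin q → ℕ) :
    0 < alphaLowerDensity α (⋃ j, (fun k => nn j + k) '' (A ∩ I j)) := by
  classical
  obtain ⟨hpos, hmono, hdiv, hratio⟩ := hα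
  set S : ℕ → ℝ := fun n => ∑ k ∈ Finset.Icc 1 n, α k with hSdef
  set B : Set ℕ := ⋃ j, (fun k => nn j + k) '' (A ∩ I j) with hBdef
  set T : Set ℕ → ℕ → ℝ := fun E n => ∑ k ∈ Finset.Icc 1 n, Set.indicator E α k
    with hTdef
  have hq : 0 < q := by
    have h0 : (0 : ℕ) ∈ ⋃ j, I j := hI.symm ▸ Set.mem_univ 0
    obtain ⟨j, -⟩ := Set.mem_iUnion.mp h0
    exact j.pos
  set N : ℕ := Finset.univ.sup nn with hNdef
  -- basic facts
  have hSnonneg : ∀ n, 0 ≤ S n := fun n => Finset.sum_nonneg fun k _ => hpos k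
  have hTnonneg : ∀ E n, 0 ≤ T E n :=
    fun E n => Finset.sum_nonneg fun k _ => Set.indicator_nonneg (fun x _ => hpos x) k
  have hTleS : ∀ E n, T E n ≤ S n := fun E n =>
    Finset.sum_le_sum fun k _ => Set.indicator_le_self' (fun x _ => hpos x) k
  have hratio_le_one : ∀ (E : Set ℕ) n, T E n / S n ≤ 1 := by
    intro E n
    rcases eq_or_lt_of_le (hSnonneg n) with h | h
    · simp [← h]
    · exact div_le_one_of_le₀ (hTleS E n) (le_of_lt h)
  have hratio_nonneg : ∀ (E : Set ℕ) n, 0 ≤ T E n / S n :=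
    fun E n => div_nonneg (hTnonneg E n) (hSnonneg n)
  -- rewrite indicator sums as filtered sums
  have conv : ∀ (E : Set ℕ) (n : ℕ),
      T E n = ∑ k ∈ (Finset.Icc 1 n).filter (· ∈ E), α k := by
    intro E n
    rw [hTdef, Finset.sum_filter]
    exact Finset.sum_congr rfl fun k _ => by by_cases h : k ∈ E <;> simp [h]
  -- pointwise cover inequality
  have hptwise : ∀ k : ℕ, Set.indicator A α k ≤ ∑ j : Fin q, Set.indicator (A ∩ I j) α k := by
    intro k
    by_cases hk : k ∈ A
    · obtain ⟨j, hj⟩ := Set.mem_iUnion.mp (hI.symm ▸ Set.mem_univ k)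
      calc Set.indicator A α k = α k := Set.indicator_of_mem hk α
        _ = Set.indicator (A ∩ I j) α k := (Set.indicator_of_mem (Set.mem_inter hk hj) α).symm
        _ ≤ ∑ j : Fin q, Set.indicator (A ∩ I j) α k :=
            Finset.single_le_sum (f := fun i => Set.indicator (A ∩ I i) α k)
              (fun i _ => Set.indicator_nonneg (fun x _ => hpos x) k) (Finset.mem_univ j)
    · rw [Set.indicator_of_notMem hk]
      exact Finset.sum_nonneg fun i _ => Set.indicator_nonneg (fun x _ => hpos x) k
  -- injection inequality
  have trans_le : ∀ (j : Fin q) (s t : Finset ℕ), (∀ k ∈ s, nn j + k ∈ t) →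
      (∑ k ∈ s, α k) ≤ ∑ m ∈ t, α m := by
    intro j s t hst
    calc ∑ k ∈ s, α k ≤ ∑ k ∈ s, α (nn j + k) :=
          Finset.sum_le_sum fun k _ => hmono k (nn j + k) (Nat.le_add_left k (nn j))
      _ = ∑ m ∈ s.image (fun k => nn j + k), α m := by
          rw [Finset.sum_image]
          intro a _ b _ h
          exact Nat.add_left_cancel h
      _ ≤ ∑ m ∈ t, α m := by
          apply Finset.sum_le_sum_of_subset_of_nonneg
          · intro m hm
            obtain ⟨k, hk, rfl⟩ := Finset.mem_image.mp hm
            exact hst k hk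
          · intro m _ _
            exact hpos m
  have hinj : ∀ (j : Fin q) (n : ℕ), T (A ∩ I j) n ≤ T B (n + N) := by
    intro j n
    rw [conv, conv]
    have hNj : nn j ≤ N := Finset.le_sup (Finset.mem_univ j)
    refine trans_le j _ _ ?_
    intro k hk
    simp only [Finset.mem_filter, Finset.mem_Icc] at hk ⊢
    obtain ⟨⟨hk1a, hk1b⟩, hk2⟩ := hk
    refine ⟨⟨by omega, by omega⟩, ?_⟩
    exact Set.mem_iUnion.mpr ⟨j, ⟨k, hk2, rfl⟩⟩
  -- key inequality
  have key : ∀ n : ℕ, T A n ≤ q * T B (n + N) := by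
    intro n
    calc T A n ≤ ∑ k ∈ Finset.Icc 1 n, ∑ j : Fin q, Set.indicator (A ∩ I j) α k :=
          Finset.sum_le_sum fun k _ => hptwise k
      _ = ∑ j : Fin q, T (A ∩ I j) n := Finset.sum_comm
      _ ≤ ∑ _j : Fin q, T B (n + N) := Finset.sum_le_sum fun j _ => hinj j n
      _ = q * T B (n + N) := by simp [mul_comm]
  -- analytic part
  set c : ℝ := alphaLowerDensity α A with hcdef
  have h1 : ∀ᶠ n in atTop, c / 2 < T A n / S n := by
    apply eventually_lt_of_lt_liminf
    · exact half_lt_self hA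
    · exact Filter.isBoundedUnder_of ⟨0, fun n => hratio_nonneg A n⟩
  have h2 : ∀ᶠ n in atTop, (1 : ℝ) ≤ S n := hdiv.eventually_ge_atTop 1
  have h3 : Tendsto (fun n : ℕ => (N : ℝ) * (α (n + N) / S (n + N))) atTop (nhds 0) := by
    have := (hratio.comp (tendsto_add_atTop_nat N)).const_mul (N : ℝ)
    simpa using this
  have h4 : ∀ᶠ n in atTop, (N : ℝ) * (α (n + N) / S (n + N)) < 1 / 2 :=
    h3.eventually_lt_const (by norm_num)
  -- S(n+N) ≤ S n + N * α (n+N)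
  have hSsplit : ∀ n : ℕ, S (n + N) ≤ S n + (N : ℝ) * α (n + N) := by
    intro n
    have hIcc : ∀ m : ℕ, Finset.Icc 1 m = Finset.Ioc 0 m := by
      intro m; rw [← Finset.Icc_add_one_left_eq_Ioc]; rfl
    have hsplit : S n + ∑ k ∈ Finset.Ioc n (n + N), α k = S (n + N) := by
      rw [hSdef]
      simp only [hIcc]
      exact Finset.sum_Ioc_consecutive α (Nat.zero_le n) (Nat.le_add_right n N)
    have hbound : ∑ k ∈ Finset.Ioc n (n + N), α k ≤ (N : ℝ) * α (n + N) := by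
      have := Finset.sum_le_card_nsmul (Finset.Ioc n (n + N)) α (α (n + N))
        (fun k hk => hmono k (n + N) (Finset.mem_Ioc.mp hk).2)
      rwa [Nat.card_Ioc, Nat.add_sub_cancel_left, nsmul_eq_mul] at this
    linarith
  -- main eventual bound at shifted indices
  have hmain : ∀ᶠ n in atTop, c / (4 * q) ≤ T B (n + N) / S (n + N) := by
    filter_upwards [h1, h2, h4] with n hn1 hn2 hn4
    have hSn : (0 : ℝ) < S n := lt_of_lt_of_le one_pos hn2
    have hSmono : S n ≤ S (n + N) := by
      apply Finset.sum_le_sum_of_subset_of_nonneg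
      · exact Finset.Icc_subset_Icc_right (Nat.le_add_right n N)
      · intro k _ _; exact hpos k
    have hSnN : (0 : ℝ) < S (n + N) := lt_of_lt_of_le hSn hSmono
    have hqpos : (0 : ℝ) < q := by exact_mod_cast hq
    have hαb : (N : ℝ) * α (n + N) < S (n + N) / 2 := by
      have h := mul_lt_mul_of_pos_right hn4 hSnN
      rw [mul_assoc, div_mul_cancel₀ _ (ne_of_gt hSnN)] at h
      linarith
    have hShalf : S (n + N) / 2 ≤ S n := by
      have := hSsplit n
      linarith
    have hTA : c / 2 * S n ≤ T A n := by
      have := (le_div_iff₀ hSn).mp (le_of_lt hn1)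
      linarith
    have hc : 0 < c := hA
    have hqne : (q : ℝ) ≠ 0 := ne_of_gt hqpos
    rw [le_div_iff₀ hSnN]
    refine le_of_mul_le_mul_left ?_ hqpos
    calc ↑q * (c / (4 * ↑q) * S (n + N)) = c / 2 * (S (n + N) / 2) := by
          field_simp
          ring
      _ ≤ c / 2 * S n := by
          have h0 : (0 : ℝ) ≤ c / 2 := by linarith
          exact mul_le_mul_of_nonneg_left hShalf h0
      _ ≤ T A n := hTA
      _ ≤ ↑q * T B (n + N) := key n
  -- transfer to all indices
  have hmain' : ∀ᶠ m in atTop, c / (4 * q) ≤ T B m / S m := by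
    rw [eventually_atTop] at hmain ⊢
    obtain ⟨n₀, h⟩ := hmain
    refine ⟨n₀ + N, fun m hm => ?_⟩
    have := h (m - N) (by omega)
    rwa [Nat.sub_add_cancel (by omega)] at this
  have hcb : IsCoboundedUnder (· ≥ ·) atTop (fun n : ℕ => T B n / S n) :=
    isCoboundedUnder_ge_of_eventually_le atTop
      (Filter.Eventually.of_forall fun m => hratio_le_one B m)
  have hcpos : 0 < c / (4 * q) := by
    have hqpos : (0 : ℝ) < q := by exact_mod_cast hq
    exact div_pos hA (by linarith)
  exact lt_of_lt_of_le hcpos (le_liminf_of_le hcb hmain')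
end
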